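/- arXiv:1906.05089 — 3 statements merged into one kernel-verified Lean document; each statement's English description precedes it below -/
import Mathlib

section
/- For every integer n ≥ 2, there exists a maximal packing broadcast f on the path P_n whose cost equals the lower broadcast packing number p_b(P_n) and such that f(v) = 1 for every f-broadcast vertex v (i.e. f takes only the values 0 and 1). -/
open SimpleGraph

namespace Broadcast

variable {V : Type*} [Fintype V]

/-- The eccentricity of a vertex: the maximum distance from `v` to any vertex. -/
noncomputable def ecc (G : SimpleGraph V) (v : V) : ℕ :=
  Finset.univ.sup fun u => G.dist v u

/-- A broadcast on `G`: `f v ≤ e_G(v)` for every vertex `v`. -/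
def IsBroadcast (G : SimpleGraph V) (f : V → ℕ) : Prop :=
  ∀ v, f v ≤ ecc G v

/-- The cost of a broadcast. -/
def cost (f : V → ℕ) : ℕ := ∑ v, f v

/-- `hears G f u` is H_f(u): the set of f-broadcast vertices `v` with `d(u,v) ≤ f v`. -/
def hears (G : SimpleGraph V) (f : V → ℕ) (u : V) : Set V :=
  {v | 1 ≤ f v ∧ G.dist u v ≤ f v}

/-- A dominating broadcast: every vertex hears some broadcast vertex. -/
def IsDominating (G : SimpleGraph V) (f : V → ℕ) : Prop :=
  IsBroadcast G f ∧ ∀ u, (hears G f u).Nonempty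

/-- A minimal dominating broadcast. -/
def IsMinimalDominating (G : SimpleGraph V) (f : V → ℕ) : Prop :=
  IsDominating G f ∧ ∀ g, IsDominating G g → (∀ v, g v ≤ f v) → g = f

/-- The broadcast domination number γ_b: minimum cost of a dominating broadcast. -/
noncomputable def broadcastDomination (G : SimpleGraph V) : ℕ :=
  sInf {c | ∃ f, IsDominating G f ∧ cost f = c}

/-- The upper broadcast domination number Γ_b: maximum cost of a minimal dominating broadcast. -/
noncomputable def upperBroadcastDomination (G : SimpleGraph V) : ℕ :=
  sSup {c | ∃ f, IsMinimalDominating G f ∧ cost f = c}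

/-- The private f-neighborhood PN_f(v): vertices hearing only `v`. -/
def privateNbhd (G : SimpleGraph V) (f : V → ℕ) (v : V) : Set V :=
  {u | hears G f u = {v}}

open Classical in
/-- The private f-border PB_f(v). -/
noncomputable def privateBorder (G : SimpleGraph V) (f : V → ℕ) (v : V) : Set V :=
  if f v = 1 ∧ privateNbhd G f v = {v} then {v}
  else {u | u ∈ privateNbhd G f v ∧ G.dist u v = f v}

/-- An irredundant broadcast: every broadcast vertex has a nonempty private border. -/
def IsIrredundant (G : SimpleGraph V) (f : V → ℕ) : Prop :=
  IsBroadcast G f ∧ ∀ v, 1 ≤ f v → (privateBorder G f v).Nonempty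

/-- A maximal irredundant broadcast. -/
def IsMaximalIrredundant (G : SimpleGraph V) (f : V → ℕ) : Prop :=
  IsIrredundant G f ∧ ∀ g, IsIrredundant G g → (∀ v, f v ≤ g v) → g = f

/-- The upper broadcast irredundance number IR_b: maximum cost of an irredundant broadcast. -/
noncomputable def upperBroadcastIrredundance (G : SimpleGraph V) : ℕ :=
  sSup {c | ∃ f, IsIrredundant G f ∧ cost f = c}

/-- The broadcast irredundance number ir_b: minimum cost of a maximal irredundant broadcast. -/
noncomputable def broadcastIrredundance (G : SimpleGraph V) : ℕ :=
  sInf {c | ∃ f, IsMaximalIrredundant G f ∧ cost f = c}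

/-- An independent broadcast: every broadcast vertex hears only itself, i.e. |H_f(v)| = 1. -/
def IsIndependent (G : SimpleGraph V) (f : V → ℕ) : Prop :=
  IsBroadcast G f ∧ ∀ v, 1 ≤ f v → hears G f v = {v}

/-- A maximal independent broadcast. -/
def IsMaximalIndependent (G : SimpleGraph V) (f : V → ℕ) : Prop :=
  IsIndependent G f ∧ ∀ g, IsIndependent G g → (∀ v, f v ≤ g v) → g = f

/-- The broadcast independence number β_b: maximum cost of an independent broadcast. -/
noncomputable def broadcastIndependence (G : SimpleGraph V) : ℕ :=
  sSup {c | ∃ f, IsIndependent G f ∧ cost f = c}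

/-- The lower broadcast independence number i_b: minimum cost of a maximal independent broadcast. -/
noncomputable def lowerBroadcastIndependence (G : SimpleGraph V) : ℕ :=
  sInf {c | ∃ f, IsMaximalIndependent G f ∧ cost f = c}

/-- A packing broadcast: every vertex hears at most one broadcast vertex. -/
def IsPacking (G : SimpleGraph V) (f : V → ℕ) : Prop :=
  IsBroadcast G f ∧ ∀ u, (hears G f u).Subsingleton

/-- A maximal packing broadcast. -/
def IsMaximalPacking (G : SimpleGraph V) (f : V → ℕ) : Prop :=
  IsPacking G f ∧ ∀ g, IsPacking G g → (∀ v, f v ≤ g v) → g = f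

/-- The broadcast packing number P_b: maximum cost of a packing broadcast. -/
noncomputable def broadcastPacking (G : SimpleGraph V) : ℕ :=
  sSup {c | ∃ f, IsPacking G f ∧ cost f = c}

/-- The lower broadcast packing number p_b: minimum cost of a maximal packing broadcast. -/
noncomputable def lowerBroadcastPacking (G : SimpleGraph V) : ℕ :=
  sInf {c | ∃ f, IsMaximalPacking G f ∧ cost f = c}

end Broadcast

namespace PbAux

open SimpleGraph Finset

/-- nat distance on positions -/
def pd (a b : ℕ) : ℕ := max a b - min a b

lemma walk_length_ge {n : ℕ} {u v : Fin n} (p : (pathGraph n).Walk u v) :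
    pd u.val v.val ≤ p.length := by
  induction p with
  | nil => simp [pd]
  | cons h p ih =>
    rw [pathGraph_adj] at h
    simp only [SimpleGraph.Walk.length_cons]
    unfold pd at *
    omega

lemma dist_le_aux {n : ℕ} (d : ℕ) : ∀ (a b : Fin n), b.val = a.val + d →
    (pathGraph n).dist a b ≤ d := by
  induction d with
  | zero => intro a b h; have : a = b := Fin.ext (by omega); simp [this]
  | succ d ih =>
    intro a b h
    have hn : a.val + d < n := by omega
    set c : Fin n := ⟨a.val + d, hn⟩ with hc
    have hadj : (pathGraph n).Adj c b := by
      rw [pathGraph_adj]; left; simp only [hc]; omega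
    have h1 : (pathGraph n).dist a b ≤ (pathGraph n).dist a c + (pathGraph n).dist c b := by
      rcases n with _ | m
      · exact absurd a.2 (by omega)
      · exact (pathGraph_connected m).dist_triangle
    have h2 : (pathGraph n).dist c b = 1 := by rwa [SimpleGraph.dist_eq_one_iff_adj]
    have h3 := ih a c rfl
    omega

lemma pathGraph_dist {n : ℕ} (u v : Fin n) :
    (pathGraph n).dist u v = pd u.val v.val := by
  apply le_antisymm
  · rcases le_or_gt u.val v.val with h | h
    · have := dist_le_aux (v.val - u.val) u v (by omega)
      unfold pd; omega
    · have := dist_le_aux (u.val - v.val) v u (by omega)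
      rw [SimpleGraph.dist_comm]
      unfold pd; omega
  · obtain ⟨p, hp⟩ := (pathGraph_preconnected n u v).exists_walk_length_eq_dist
    rw [← hp]; exact walk_length_ge p

lemma ecc_eq {n : ℕ} (v : Fin n) :
    Broadcast.ecc (pathGraph n) v = max v.val (n - 1 - v.val) := by
  have hn : 0 < n := v.pos
  unfold Broadcast.ecc
  apply le_antisymm
  · apply Finset.sup_le
    intro u _
    rw [pathGraph_dist]
    have := u.2
    unfold pd; omega
  · have h0 := Finset.le_sup (f := fun u => (pathGraph n).dist v u)
      (Finset.mem_univ (⟨0, hn⟩ : Fin n))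
    have h1 := Finset.le_sup (f := fun u => (pathGraph n).dist v u)
      (Finset.mem_univ (⟨n - 1, by omega⟩ : Fin n))
    simp only [pathGraph_dist, pd, Fin.val_mk] at h0 h1 ⊢
    have := v.2
    omega

lemma midpoint {n : ℕ} (u w : Fin n) (a b : ℕ) (h : pd u.val w.val ≤ a + b) :
    ∃ x : Fin n, pd x.val u.val ≤ a ∧ pd x.val w.val ≤ b := by
  rcases le_or_gt u.val w.val with hc | hc
  · have hx : min (u.val + a) w.val < n := by have := w.2; omega
    refine ⟨⟨min (u.val + a) w.val, hx⟩, ?_, ?_⟩ <;>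
      (simp only [pd, Fin.val_mk] at *; omega)
  · have hx : max (u.val - a) w.val < n := by have := u.2; have := w.2; omega
    refine ⟨⟨max (u.val - a) w.val, hx⟩, ?_, ?_⟩ <;>
      (simp only [pd, Fin.val_mk] at *; omega)

lemma mem_hears {n : ℕ} {f : Fin n → ℕ} {x v : Fin n} :
    v ∈ Broadcast.hears (pathGraph n) f x ↔ 1 ≤ f v ∧ pd x.val v.val ≤ f v := by
  unfold Broadcast.hears
  rw [Set.mem_setOf_eq, pathGraph_dist]

/-- Sufficiency: a 0/1 function with the right arithmetic properties is a maximal packing. -/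
lemma sufficiency {n : ℕ} (hn : 2 ≤ n) (f : Fin n → ℕ)
    (h01 : ∀ v, f v ≤ 1)
    (hsep : ∀ u w : Fin n, u ≠ w → 1 ≤ f u → 1 ≤ f w → 3 ≤ pd u.val w.val)
    (hcov : ∀ z : Fin n, ∃ u, 1 ≤ f u ∧ pd z.val u.val ≤ 2)
    (hpart : ∀ u, 1 ≤ f u →
      max u.val (n - 1 - u.val) ≤ 1 ∨ ∃ w, w ≠ u ∧ 1 ≤ f w ∧ pd u.val w.val ≤ 3) :
    Broadcast.IsMaximalPacking (pathGraph n) f := by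
  have hecc : ∀ v : Fin n, 1 ≤ Broadcast.ecc (pathGraph n) v := by
    intro v
    rw [ecc_eq]
    have := v.2; omega
  constructor
  · constructor
    · exact fun v => le_trans (h01 v) (hecc v)
    · intro x a ha b hb
      rw [mem_hears] at ha hb
      by_contra hne
      have := hsep a b hne ha.1 hb.1
      have h1 := h01 a; have h2 := h01 b
      unfold pd at *
      omega
  · intro g hg hfg
    funext v
    by_contra hne
    have hlt : f v < g v := lt_of_le_of_ne (hfg v) (fun h => hne h.symm)
    -- find two distinct vertices both heard by some x under g
    have key : ∃ u w : Fin n, u ≠ w ∧ pd u.val w.val ≤ g u + g w ∧ 1 ≤ g u ∧ 1 ≤ g w := by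
      rcases Nat.lt_or_ge (f v) 1 with hv0 | hv1
      · -- f v = 0, g v ≥ 1
        obtain ⟨u, hu1, hu2⟩ := hcov v
        refine ⟨u, v, ?_, ?_, le_trans hu1 (hfg u), by omega⟩
        · intro h; rw [h] at hu1; omega
        · have := hfg u
          unfold pd at *; omega
      · -- f v = 1, g v ≥ 2
        rcases hpart v hv1 with hcap | ⟨w, hwv, hw1, hw3⟩
        · -- ecc v ≤ 1 but g v ≥ 2 ≤ ecc v : contradiction
          exfalso
          have := hg.1 v
          rw [ecc_eq] at this
          have := h01 v
          omega
        · refine ⟨v, w, fun h => hwv h.symm, ?_, by omega, le_trans hw1 (hfg w)⟩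
          have := hfg w
          have := h01 v
          unfold pd at *; omega
    obtain ⟨u, w, huw, hd, hgu, hgw⟩ := key
    obtain ⟨x, hxu, hxw⟩ := midpoint u w (g u) (g w) hd
    have h1 : u ∈ Broadcast.hears (pathGraph n) g x := mem_hears.mpr ⟨hgu, hxu⟩
    have h2 : w ∈ Broadcast.hears (pathGraph n) g x := mem_hears.mpr ⟨hgw, hxw⟩
    exact huw (hg.2 x h1 h2)

lemma nec_sep {n : ℕ} {f : Fin n → ℕ} (hp : Broadcast.IsPacking (pathGraph n) f) :
    ∀ u w : Fin n, u ≠ w → 1 ≤ f u → 1 ≤ f w → f u + f w + 1 ≤ pd u.val w.val := by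
  intro u w huw hu hw
  by_contra hle
  obtain ⟨x, hxu, hxw⟩ := midpoint u w (f u) (f w) (by omega)
  exact huw (hp.2 x (mem_hears.mpr ⟨hu, hxu⟩) (mem_hears.mpr ⟨hw, hxw⟩))

lemma nec_cover {n : ℕ} (hn : 2 ≤ n) {f : Fin n → ℕ}
    (hmp : Broadcast.IsMaximalPacking (pathGraph n) f) :
    ∀ z : Fin n, ∃ u, 1 ≤ f u ∧ pd z.val u.val ≤ f u + 1 := by
  classical
  intro z
  by_cases hz : 1 ≤ f z
  · exact ⟨z, hz, by unfold pd; omega⟩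
  · by_contra hno
    push_neg at hno
    set g := Function.update f z 1 with hg
    have hgz : g z = 1 := Function.update_self z 1 f
    have hgv : ∀ v, v ≠ z → g v = f v := fun v hv => Function.update_of_ne hv 1 f
    have hpack : Broadcast.IsPacking (pathGraph n) g := by
      constructor
      · intro v
        by_cases hv : v = z
        · subst hv
          rw [hgz, ecc_eq]
          have := v.2; omega
        · rw [hgv v hv]; exact hmp.1.1 v
      · intro x a ha b hb
        rw [mem_hears] at ha hb
        by_cases haz : a = z
        · by_cases hbz : b = z
          · rw [haz, hbz]
          · exfalso
            rw [hgv b hbz] at hb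
            rw [haz, hgz] at ha
            have := hno b hb.1
            unfold pd at *; omega
        · by_cases hbz : b = z
          · exfalso
            rw [hgv a haz] at ha
            rw [hbz, hgz] at hb
            have := hno a ha.1
            unfold pd at *; omega
          · rw [hgv a haz] at ha
            rw [hgv b hbz] at hb
            exact hmp.1.2 x (mem_hears.mpr ha) (mem_hears.mpr hb)
    have hle : ∀ v, f v ≤ g v := by
      intro v
      by_cases hv : v = z
      · subst hv; rw [hgz]; omega
      · rw [hgv v hv]
    have := hmp.2 g hpack hle
    rw [← this, hgz] at hz
    omega

lemma nec_partner {n : ℕ} {f : Fin n → ℕ}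
    (hmp : Broadcast.IsMaximalPacking (pathGraph n) f) :
    ∀ u : Fin n, 1 ≤ f u → f u + 1 ≤ max u.val (n - 1 - u.val) →
      ∃ w, w ≠ u ∧ 1 ≤ f w ∧ pd u.val w.val ≤ f u + f w + 1 := by
  classical
  intro u hu hecc
  by_contra hno
  push_neg at hno
  set g := Function.update f u (f u + 1) with hg
  have hgu : g u = f u + 1 := Function.update_self u (f u + 1) f
  have hgv : ∀ v, v ≠ u → g v = f v := fun v hv => Function.update_of_ne hv (f u + 1) f
  have hpack : Broadcast.IsPacking (pathGraph n) g := by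
    constructor
    · intro v
      by_cases hv : v = u
      · subst hv; rw [hgu, ecc_eq]; exact hecc
      · rw [hgv v hv]; exact hmp.1.1 v
    · intro x a ha b hb
      rw [mem_hears] at ha hb
      by_cases hau : a = u
      · by_cases hbu : b = u
        · rw [hau, hbu]
        · exfalso
          rw [hgv b hbu] at hb
          rw [hau, hgu] at ha
          have := hno b (fun h => hbu h) hb.1
          unfold pd at *; omega
      · by_cases hbu : b = u
        · exfalso
          rw [hgv a hau] at ha
          rw [hbu, hgu] at hb
          have := hno a (fun h => hau h) ha.1
          unfold pd at *; omega
        · rw [hgv a hau] at ha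
          rw [hgv b hbu] at hb
          exact hmp.1.2 x (mem_hears.mpr ha) (mem_hears.mpr hb)
  have hle : ∀ v, f v ≤ g v := by
    intro v
    by_cases hv : v = u
    · subst hv; rw [hgu]; omega
    · rw [hgv v hv]
  have := hmp.2 g hpack hle
  have : g u = f u := by rw [this]
  omega

/-- the exact value of the lower broadcast packing number of the path -/
def cn (n : ℕ) : ℕ :=
  2 * ((n + 4) / 8) + (if n % 8 = 1 ∨ n % 8 = 2 ∨ n % 8 = 3 then 1 else 0)

lemma lower_bound {n : ℕ} (hn : 2 ≤ n) (f : Fin n → ℕ)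
    (hmp : Broadcast.IsMaximalPacking (pathGraph n) f) : cn n ≤ Broadcast.cost f := by
  classical
  have hsep := nec_sep hmp.1
  have hcov := nec_cover hn hmp
  by_cases hcap : ∃ u : Fin n, 1 ≤ f u ∧ max u.val (n - 1 - u.val) < f u + 1
  · -- a capped vertex has huge value
    obtain ⟨u, hu1, hu2⟩ := hcap
    have hbc := hmp.1.1 u
    rw [ecc_eq] at hbc
    have hcost : f u ≤ Broadcast.cost f :=
      Finset.single_le_sum (fun i _ => Nat.zero_le (f i)) (Finset.mem_univ u)
    have hun := u.2
    unfold cn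
    by_cases h8 : n % 8 = 1 ∨ n % 8 = 2 ∨ n % 8 = 3
    · rw [if_pos h8]
      rcases h8 with h | h | h <;> omega
    · rw [if_neg h8]
      push_neg at h8
      obtain ⟨h1, h2, h3⟩ := h8
      omega
  · push_neg at hcap
    have hpart : ∀ u : Fin n, 1 ≤ f u →
        ∃ w, w ≠ u ∧ 1 ≤ f w ∧ pd u.val w.val = f u + f w + 1 := by
      intro u hu
      obtain ⟨w, hw1, hw2, hw3⟩ := nec_partner hmp u hu (hcap u hu)
      exact ⟨w, hw1, hw2, le_antisymm hw3 (hsep u w (fun h => hw1 h.symm) hu hw2)⟩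
    set B : Finset (Fin n) := Finset.univ.filter (fun u : Fin n => 1 ≤ f u) with hB
    set E : Finset (Fin n × Fin n) := (B ×ˢ B).filter
      (fun p : Fin n × Fin n => p.1.val < p.2.val ∧
        p.2.val - p.1.val = f p.1 + f p.2 + 1) with hE
    set O : Fin n × Fin n → Finset (Fin n) := fun e => Finset.univ.filter
      (fun z : Fin n => z.val = e.1.val + f e.1 ∨ z.val = e.1.val + f e.1 + 1) with hO
    have hmemB : ∀ u : Fin n, u ∈ B ↔ 1 ≤ f u := by
      intro u; rw [hB, Finset.mem_filter]; simp
    have hmemE : ∀ e : Fin n × Fin n, e ∈ E ↔ (1 ≤ f e.1 ∧ 1 ≤ f e.2 ∧ e.1.val < e.2.val ∧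
        e.2.val - e.1.val = f e.1 + f e.2 + 1) := by
      intro e
      rw [hE, Finset.mem_filter, Finset.mem_product, hmemB, hmemB]
      tauto
    have hmemO : ∀ e, ∀ z : Fin n, z ∈ O e ↔
        (z.val = e.1.val + f e.1 ∨ z.val = e.1.val + f e.1 + 1) := by
      intro e z; rw [hO]; simp
    -- no broadcast vertex strictly between the endpoints of an edge
    have hNoMid : ∀ e ∈ E, ∀ b : Fin n, 1 ≤ f b →
        ¬(e.1.val < b.val ∧ b.val < e.2.val) := by
      intro e he b hb hmid
      rw [hmemE] at he
      have hb1 : b ≠ e.1 := by intro h; rw [h] at hmid; omega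
      have hb2 : b ≠ e.2 := by intro h; rw [h] at hmid; omega
      have h1 := hsep b e.1 hb1 hb he.1
      have h2 := hsep b e.2 hb2 hb he.2.1
      unfold pd at h1 h2
      omega
    -- O e lies strictly between the endpoints
    have hOin : ∀ e ∈ E, ∀ z ∈ O e, e.1.val < z.val ∧ z.val < e.2.val := by
      intro e he z hz
      rw [hmemE] at he
      rw [hmemO] at hz
      omega
    have hOcard : ∀ e ∈ E, (O e).card = 2 := by
      intro e he
      rw [hmemE] at he
      have hlt1 : e.1.val + f e.1 < n := by have := e.2.2; omega
      have hlt2 : e.1.val + f e.1 + 1 < n := by have := e.2.2; omega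
      rw [Finset.card_eq_two]
      refine ⟨⟨e.1.val + f e.1, hlt1⟩, ⟨e.1.val + f e.1 + 1, hlt2⟩, ?_, ?_⟩
      · intro h
        rw [Fin.ext_iff] at h
        simp only [Fin.val_mk] at h
        omega
      · ext z
        rw [hmemO]
        simp only [Finset.mem_insert, Finset.mem_singleton, Fin.ext_iff, Fin.val_mk]
    have hOdisj : ∀ e ∈ E, ∀ e' ∈ E, e ≠ e' → Disjoint (O e) (O e') := by
      intro e he e' he' hne
      rw [Finset.disjoint_left]
      intro z hz hz'
      apply hne
      have h1 := hOin e he z hz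
      have h2 := hOin e' he' z hz'
      have heE := he; have heE' := he'
      rw [hmemE] at heE heE'
      -- first components are equal
      have hfst : e.1 = e'.1 := by
        by_contra hf
        rcases Nat.lt_or_ge e.1.val e'.1.val with hlt | hge
        · exact hNoMid e he e'.1 heE'.1 ⟨hlt, by omega⟩
        · rcases Nat.lt_or_ge e'.1.val e.1.val with hlt' | hge'
          · exact hNoMid e' he' e.1 heE.1 ⟨hlt', by omega⟩
          · exact hf (Fin.ext (by omega))
      have hsnd : e.2 = e'.2 := by
        by_contra hf
        rcases Nat.lt_or_ge e.2.val e'.2.val with hlt | hge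
        · exact hNoMid e' he' e.2 heE.2.1 ⟨by rw [← hfst]; omega, hlt⟩
        · rcases Nat.lt_or_ge e'.2.val e.2.val with hlt' | hge'
          · exact hNoMid e he e'.2 heE'.2.1 ⟨by rw [hfst]; omega, hlt'⟩
          · exact hf (Fin.ext (by omega))
      exact Prod.ext hfst hsnd
    set U : Finset (Fin n) := E.biUnion O with hU
    have hUcard : U.card = 2 * E.card := by
      rw [hU, Finset.card_biUnion hOdisj]
      rw [Finset.sum_congr rfl hOcard, Finset.sum_const, smul_eq_mul]
      ring
    set deg : Fin n → ℕ :=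
      fun z => (B.filter (fun u => pd z.val u.val ≤ f u + 1)).card with hdeg
    have hdeg1 : ∀ z : Fin n, 1 ≤ deg z := by
      intro z
      obtain ⟨u, hu1, hu2⟩ := hcov z
      rw [hdeg]
      dsimp only
      exact Finset.card_pos.mpr ⟨u, Finset.mem_filter.mpr ⟨(hmemB u).mpr hu1, hu2⟩⟩
    have hdeg2 : ∀ z ∈ U, 2 ≤ deg z := by
      intro z hz
      rw [hU, Finset.mem_biUnion] at hz
      obtain ⟨e, he, hze⟩ := hz
      have heE := he; rw [hmemE] at heE
      rw [hmemO] at hze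
      rw [hdeg]
      apply Finset.one_lt_card.mpr
      refine ⟨e.1, ?_, e.2, ?_, ?_⟩
      · exact Finset.mem_filter.mpr ⟨(hmemB e.1).mpr heE.1, by unfold pd; omega⟩
      · exact Finset.mem_filter.mpr ⟨(hmemB e.2).mpr heE.2.1, by unfold pd; omega⟩
      · intro h; rw [Fin.ext_iff] at h; omega
    -- double counting
    have hdouble : ∑ u ∈ B, (Finset.univ.filter
        (fun z : Fin n => pd z.val u.val ≤ f u + 1)).card = ∑ z : Fin n, deg z := by
      simp only [Finset.card_filter, hdeg]
      exact Finset.sum_comm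
    have hIcard : ∀ u ∈ B, (Finset.univ.filter
        (fun z : Fin n => pd z.val u.val ≤ f u + 1)).card ≤ 2 * f u + 3 := by
      intro u hu
      have := Finset.card_le_card_of_injOn
        (s := Finset.univ.filter (fun z : Fin n => pd z.val u.val ≤ f u + 1))
        (t := Finset.range (2 * f u + 3))
        (fun z : Fin n => z.val + (f u + 1) - u.val)
        (fun z hz => by
          rw [Finset.mem_coe, Finset.mem_filter] at hz
          rw [Finset.mem_coe, Finset.mem_range]
          have := hz.2
          unfold pd at this
          dsimp only
          omega)
        (fun z1 h1 z2 h2 heq => by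
          simp only [Finset.coe_filter, Set.mem_setOf_eq] at h1 h2
          have e1 := h1.2; have e2 := h2.2
          unfold pd at e1 e2
          dsimp only at heq
          apply Fin.ext
          omega)
      simpa using this
    have hsumI : ∑ u ∈ B, (Finset.univ.filter
        (fun z : Fin n => pd z.val u.val ≤ f u + 1)).card
          ≤ 2 * Broadcast.cost f + 3 * B.card := by
      calc ∑ u ∈ B, (Finset.univ.filter
          (fun z : Fin n => pd z.val u.val ≤ f u + 1)).card
          ≤ ∑ u ∈ B, (2 * f u + 3) := Finset.sum_le_sum hIcard
        _ = 2 * ∑ u ∈ B, f u + 3 * B.card := by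
            rw [Finset.sum_add_distrib, Finset.sum_const, ← Finset.mul_sum, smul_eq_mul]
            ring
        _ ≤ 2 * Broadcast.cost f + 3 * B.card := by
            have : ∑ u ∈ B, f u ≤ Broadcast.cost f :=
              Finset.sum_le_sum_of_subset (Finset.subset_univ B)
            omega
    have hsum1 : n + U.card ≤ ∑ z : Fin n, deg z := by
      have hle : ∀ z ∈ Finset.univ, (if z ∈ U then 2 else 1) ≤ deg z := by
        intro z _
        by_cases hz : z ∈ U
        · simp only [hz, if_true]; exact hdeg2 z hz
        · simp only [hz, if_false]; exact hdeg1 z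
      have h2 : ∑ z : Fin n, (if z ∈ U then 2 else 1) = n + U.card := by
        have : ∀ z : Fin n, (if z ∈ U then (2:ℕ) else 1) = 1 + (if z ∈ U then 1 else 0) := by
          intro z; split <;> rfl
        simp only [this]
        rw [Finset.sum_add_distrib, Finset.sum_const, smul_eq_mul, mul_one]
        rw [Finset.sum_ite_mem, Finset.univ_inter, Finset.sum_const, smul_eq_mul, mul_one]
        simp
      calc n + U.card = ∑ z : Fin n, (if z ∈ U then 2 else 1) := h2.symm
        _ ≤ ∑ z : Fin n, deg z := Finset.sum_le_sum hle
    -- each broadcast vertex is an endpoint of some edge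
    have hBE : B.card ≤ 2 * E.card := by
      have hsub : B ⊆ E.biUnion (fun e => {e.1, e.2}) := by
        intro u hu
        rw [hmemB] at hu
        obtain ⟨w, hw1, hw2, hw3⟩ := hpart u hu
        rcases Nat.lt_or_ge u.val w.val with hlt | hge
        · refine Finset.mem_biUnion.mpr ⟨(u, w), ?_, ?_⟩
          · rw [hmemE]
            refine ⟨hu, hw2, hlt, ?_⟩
            unfold pd at hw3
            dsimp only
            omega
          · simp
        · have hne : w.val < u.val := by
            rcases Nat.lt_or_ge w.val u.val with h | h
            · exact h
            · exact absurd (Fin.ext (by omega)) hw1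
          refine Finset.mem_biUnion.mpr ⟨(w, u), ?_, ?_⟩
          · rw [hmemE]
            refine ⟨hw2, hu, hne, ?_⟩
            unfold pd at hw3
            dsimp only
            omega
          · simp
      calc B.card ≤ (E.biUnion (fun e => {e.1, e.2})).card := Finset.card_le_card hsub
        _ ≤ ∑ e ∈ E, ({e.1, e.2} : Finset (Fin n)).card := Finset.card_biUnion_le
        _ ≤ ∑ e ∈ E, 2 := Finset.sum_le_sum (fun e _ => Finset.card_insert_le _ _ |>.trans
            (by simp))
        _ = 2 * E.card := by rw [Finset.sum_const, smul_eq_mul]; ring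
    have hBcost : B.card ≤ Broadcast.cost f := by
      calc B.card = ∑ _u ∈ B, 1 := by rw [Finset.sum_const, smul_eq_mul, mul_one]
        _ ≤ ∑ u ∈ B, f u := Finset.sum_le_sum (fun u hu => (hmemB u).mp hu)
        _ ≤ Broadcast.cost f := Finset.sum_le_sum_of_subset (Finset.subset_univ B)
    have hmain : n + 2 * E.card ≤ 2 * Broadcast.cost f + 3 * B.card := by
      rw [← hUcard]
      exact le_trans hsum1 (le_trans (le_of_eq hdouble.symm) hsumI)
    unfold cn
    by_cases h8 : n % 8 = 1 ∨ n % 8 = 2 ∨ n % 8 = 3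
    · rw [if_pos h8]
      rcases h8 with h | h | h <;> omega
    · rw [if_neg h8]
      push_neg at h8
      obtain ⟨h1, h2, h3⟩ := h8
      omega


/-! ### The explicit construction -/

def kk (n : ℕ) : ℕ := (n - 1) / 8

/-- The set of broadcast positions for the optimal 0/1 maximal packing broadcast. -/
def inS (n z : ℕ) : Prop :=
  (∃ j, j < kk n ∧ (z = 8 * j + 2 ∨ z = 8 * j + 5)) ∨
  (n ≤ 8 * kk n + 3 ∧ 1 ≤ kk n ∧ z = 8 * kk n) ∨
  (n ≤ 3 ∧ z = n - 2) ∨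
  (8 * kk n + 4 ≤ n ∧
    (z = min (8 * kk n + 2) (n - 4) ∨ z = min (8 * kk n + 2) (n - 4) + 3))

lemma kk_bounds {n : ℕ} (hn : 2 ≤ n) : 8 * kk n + 1 ≤ n ∧ n ≤ 8 * kk n + 8 := by
  unfold kk; omega

lemma inS_lt {n z : ℕ} (hn : 2 ≤ n) (h : inS n z) : z < n := by
  have hk := kk_bounds hn
  rcases h with ⟨j, hj, hz⟩ | h | h | h
  · omega
  · omega
  · omega
  · omega

lemma inS_sep {n a b : ℕ} (hn : 2 ≤ n) (ha : inS n a) (hb : inS n b) (hne : a ≠ b) :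
    3 ≤ pd a b := by
  have hk := kk_bounds hn
  unfold pd
  rcases ha with ⟨j, hj, hz⟩ | ha | ha | ha <;>
    rcases hb with ⟨j', hj', hz'⟩ | hb | hb | hb <;>
      omega

lemma inS_cover {n z : ℕ} (hn : 2 ≤ n) (hz : z < n) : ∃ u, inS n u ∧ pd z u ≤ 2 := by
  have hk := kk_bounds hn
  unfold pd
  by_cases hmain : z < 8 * kk n
  · by_cases h5 : z % 8 ≤ 4
    · exact ⟨8 * (z / 8) + 2, Or.inl ⟨z / 8, by omega, by omega⟩, by omega⟩
    · exact ⟨8 * (z / 8) + 5, Or.inl ⟨z / 8, by omega, by omega⟩, by omega⟩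
  · by_cases hs4 : 8 * kk n + 4 ≤ n
    · by_cases hq : z ≤ min (8 * kk n + 2) (n - 4) + 2
      · exact ⟨min (8 * kk n + 2) (n - 4),
          Or.inr (Or.inr (Or.inr ⟨hs4, Or.inl rfl⟩)), by omega⟩
      · exact ⟨min (8 * kk n + 2) (n - 4) + 3,
          Or.inr (Or.inr (Or.inr ⟨hs4, Or.inr rfl⟩)), by omega⟩
    · by_cases hk0 : kk n = 0
      · exact ⟨n - 2, Or.inr (Or.inr (Or.inl ⟨by omega, rfl⟩)), by omega⟩
      · exact ⟨8 * kk n, Or.inr (Or.inl ⟨by omega, by omega, rfl⟩), by omega⟩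

lemma inS_partner {n u : ℕ} (hn : 2 ≤ n) (h : inS n u) :
    max u (n - 1 - u) ≤ 1 ∨ ∃ w, inS n w ∧ w ≠ u ∧ pd u w ≤ 3 := by
  have hk := kk_bounds hn
  rcases h with ⟨j, hj, hz⟩ | h | h | h
  · rcases hz with hz | hz
    · exact Or.inr ⟨8 * j + 5, Or.inl ⟨j, hj, Or.inr rfl⟩, by omega, by unfold pd; omega⟩
    · exact Or.inr ⟨8 * j + 2, Or.inl ⟨j, hj, Or.inl rfl⟩, by omega, by unfold pd; omega⟩
  · exact Or.inr ⟨8 * (kk n - 1) + 5, Or.inl ⟨kk n - 1, by omega, Or.inr rfl⟩, by omega,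
      by unfold pd; omega⟩
  · exact Or.inl (by omega)
  · rcases h.2 with hz | hz
    · exact Or.inr ⟨min (8 * kk n + 2) (n - 4) + 3,
        Or.inr (Or.inr (Or.inr ⟨h.1, Or.inr rfl⟩)), by omega, by unfold pd; omega⟩
    · exact Or.inr ⟨min (8 * kk n + 2) (n - 4),
        Or.inr (Or.inr (Or.inr ⟨h.1, Or.inl rfl⟩)), by omega, by unfold pd; omega⟩

open Classical in
lemma inS_card {n : ℕ} (hn : 2 ≤ n) :
    (Finset.univ.filter (fun v : Fin n => inS n v.val)).card ≤ cn n := by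
  have hk := kk_bounds hn
  by_cases hs4 : 8 * kk n + 4 ≤ n
  · set q := min (8 * kk n + 2) (n - 4) with hq
    have hsub := Finset.card_le_card_of_injOn (fun v : Fin n => v.val)
      (s := Finset.univ.filter (fun v : Fin n => inS n v.val))
      (t := ((Finset.range (kk n)).image (fun j => 8 * j + 2)) ∪
            ((Finset.range (kk n)).image (fun j => 8 * j + 5)) ∪ ({q, q + 3} : Finset ℕ))
      (fun v hv => by
        rw [Finset.mem_coe, Finset.mem_filter] at hv
        simp only [Finset.mem_coe, Finset.mem_union, Finset.mem_image, Finset.mem_range,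
          Finset.mem_insert, Finset.mem_singleton]
        rcases hv.2 with ⟨j, hj, hz | hz⟩ | h | h | h
        · exact Or.inl (Or.inl ⟨j, hj, hz.symm⟩)
        · exact Or.inl (Or.inr ⟨j, hj, hz.symm⟩)
        · omega
        · omega
        · rcases h.2 with hz | hz
          · exact Or.inr (Or.inl hz)
          · exact Or.inr (Or.inr hz))
      (fun v1 _ v2 _ h => Fin.ext h)
    have hcard : (((Finset.range (kk n)).image (fun j => 8 * j + 2)) ∪
            ((Finset.range (kk n)).image (fun j => 8 * j + 5)) ∪
            ({q, q + 3} : Finset ℕ)).card ≤ 2 * kk n + 2 := by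
      calc (((Finset.range (kk n)).image (fun j => 8 * j + 2)) ∪
            ((Finset.range (kk n)).image (fun j => 8 * j + 5)) ∪
            ({q, q + 3} : Finset ℕ)).card
          ≤ (((Finset.range (kk n)).image (fun j => 8 * j + 2)) ∪
            ((Finset.range (kk n)).image (fun j => 8 * j + 5))).card +
            ({q, q + 3} : Finset ℕ).card := Finset.card_union_le _ _
        _ ≤ ((Finset.range (kk n)).image (fun j => 8 * j + 2)).card +
            ((Finset.range (kk n)).image (fun j => 8 * j + 5)).card +
            ({q, q + 3} : Finset ℕ).card := by
              have := Finset.card_union_le ((Finset.range (kk n)).image (fun j => 8 * j + 2))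
                ((Finset.range (kk n)).image (fun j => 8 * j + 5))
              omega
        _ ≤ kk n + kk n + 2 := by
              have h1 := Finset.card_image_le (s := Finset.range (kk n))
                (f := fun j => 8 * j + 2)
              have h2 := Finset.card_image_le (s := Finset.range (kk n))
                (f := fun j => 8 * j + 5)
              have h3 : ({q, q + 3} : Finset ℕ).card ≤ 2 :=
                (Finset.card_insert_le _ _).trans (by simp)
              simp only [Finset.card_range] at h1 h2
              omega
        _ = 2 * kk n + 2 := by ring
    have hval : cn n = 2 * kk n + 2 := by
      have h8 : ¬(n % 8 = 1 ∨ n % 8 = 2 ∨ n % 8 = 3) := by unfold kk at *; omega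
      unfold cn
      rw [if_neg h8]
      unfold kk at *
      omega
    omega
  · -- tail is a single vertex
    set x0 := if kk n = 0 then n - 2 else 8 * kk n with hx0
    have hsub := Finset.card_le_card_of_injOn (fun v : Fin n => v.val)
      (s := Finset.univ.filter (fun v : Fin n => inS n v.val))
      (t := ((Finset.range (kk n)).image (fun j => 8 * j + 2)) ∪
            ((Finset.range (kk n)).image (fun j => 8 * j + 5)) ∪ ({x0} : Finset ℕ))
      (fun v hv => by
        rw [Finset.mem_coe, Finset.mem_filter] at hv
        simp only [Finset.mem_coe, Finset.mem_union, Finset.mem_image, Finset.mem_range,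
          Finset.mem_singleton]
        rcases hv.2 with ⟨j, hj, hz | hz⟩ | h | h | h
        · exact Or.inl (Or.inl ⟨j, hj, hz.symm⟩)
        · exact Or.inl (Or.inr ⟨j, hj, hz.symm⟩)
        · refine Or.inr ?_
          rw [hx0, if_neg (by omega)]
          omega
        · refine Or.inr ?_
          rw [hx0, if_pos (by omega)]
          omega
        · omega)
      (fun v1 _ v2 _ h => Fin.ext h)
    have hcard : (((Finset.range (kk n)).image (fun j => 8 * j + 2)) ∪
            ((Finset.range (kk n)).image (fun j => 8 * j + 5)) ∪
            ({x0} : Finset ℕ)).card ≤ 2 * kk n + 1 := by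
      calc (((Finset.range (kk n)).image (fun j => 8 * j + 2)) ∪
            ((Finset.range (kk n)).image (fun j => 8 * j + 5)) ∪
            ({x0} : Finset ℕ)).card
          ≤ (((Finset.range (kk n)).image (fun j => 8 * j + 2)) ∪
            ((Finset.range (kk n)).image (fun j => 8 * j + 5))).card + 1 := by
              have := Finset.card_union_le
                (((Finset.range (kk n)).image (fun j => 8 * j + 2)) ∪
                 ((Finset.range (kk n)).image (fun j => 8 * j + 5)))
                ({x0} : Finset ℕ)
              simp only [Finset.card_singleton] at this
              omega
        _ ≤ 2 * kk n + 1 := by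
              have := Finset.card_union_le ((Finset.range (kk n)).image (fun j => 8 * j + 2))
                ((Finset.range (kk n)).image (fun j => 8 * j + 5))
              have h1 := Finset.card_image_le (s := Finset.range (kk n))
                (f := fun j => 8 * j + 2)
              have h2 := Finset.card_image_le (s := Finset.range (kk n))
                (f := fun j => 8 * j + 5)
              simp only [Finset.card_range] at h1 h2
              omega
    have hval : cn n = 2 * kk n + 1 := by
      have h8 : n % 8 = 1 ∨ n % 8 = 2 ∨ n % 8 = 3 := by unfold kk at *; omega
      unfold cn
      rw [if_pos h8]
      unfold kk at *
      omega
    omega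

end PbAux

open Broadcast in
/-- For every integer n ≥ 2, there exists a p_b-broadcast f on P_n such that
f v = 1 for every f-broadcast vertex v. -/
theorem exists_pb_broadcast_zero_one_pathGraph (n : ℕ) (hn : 2 ≤ n) :
    ∃ f : Fin n → ℕ, IsMaximalPacking (SimpleGraph.pathGraph n) f ∧
      cost f = lowerBroadcastPacking (SimpleGraph.pathGraph n) ∧
      ∀ v : Fin n, 1 ≤ f v → f v = 1 := by
  classical
  set f : Fin n → ℕ := fun v => if PbAux.inS n v.val then 1 else 0 with hf
  have h01 : ∀ v, f v ≤ 1 := by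
    intro v
    rw [hf]
    dsimp only
    split <;> omega
  have hfiff : ∀ v : Fin n, 1 ≤ f v ↔ PbAux.inS n v.val := by
    intro v
    rw [hf]
    dsimp only
    split <;> simp_all
  -- the construction is a maximal packing broadcast
  have hmp : IsMaximalPacking (SimpleGraph.pathGraph n) f := by
    apply PbAux.sufficiency hn f h01
    · intro u w huw hu hw
      exact PbAux.inS_sep hn ((hfiff u).mp hu) ((hfiff w).mp hw)
        (fun h => huw (Fin.ext h))
    · intro z
      obtain ⟨u, hu1, hu2⟩ := PbAux.inS_cover hn z.2
      exact ⟨⟨u, PbAux.inS_lt hn hu1⟩, (hfiff _).mpr hu1, hu2⟩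
    · intro u hu
      rcases PbAux.inS_partner hn ((hfiff u).mp hu) with hcap | ⟨w, hw1, hw2, hw3⟩
      · exact Or.inl hcap
      · refine Or.inr ⟨⟨w, PbAux.inS_lt hn hw1⟩, ?_, (hfiff _).mpr hw1, hw3⟩
        intro h
        rw [Fin.ext_iff] at h
        exact hw2 h
  -- its cost is at most cn n
  have hub : cost f ≤ PbAux.cn n := by
    have hcf : cost f = (Finset.univ.filter (fun v : Fin n => PbAux.inS n v.val)).card := by
      rw [Broadcast.cost, Finset.card_filter]
    rw [hcf]
    exact PbAux.inS_card hn
  have hcost : cost f = PbAux.cn n :=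
    le_antisymm hub (PbAux.lower_bound hn f hmp)
  have hmem : cost f ∈ {c | ∃ g, IsMaximalPacking (SimpleGraph.pathGraph n) g ∧ cost g = c} :=
    ⟨f, hmp, rfl⟩
  refine ⟨f, hmp, ?_, fun v hv => le_antisymm (h01 v) hv⟩
  apply le_antisymm
  · apply le_csInf ⟨cost f, hmem⟩
    rintro c ⟨g, hg, rfl⟩
    calc cost f ≤ PbAux.cn n := hub
      _ ≤ cost g := PbAux.lower_bound hn g hg
  · exact Nat.sInf_le hmem
end

section
/- For every integer n ≥ 2, the lower broadcast packing number of the path P_n equals n/4 if n ≡ 0 (mod 8), equals 2⌊n/8⌋ + 1 if n ≡ 1, 2 or 3 (mod 8), and equals 2⌊n/8⌋ + 2 if n ≡ 4, 5, 6 or 7 (mod 8). -/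
open SimpleGraph

/-! ### Auxiliary lemmas for paths -/

namespace PBAux

open Broadcast

/-- Distance in a path graph. -/
lemma pg_walk_le {n : ℕ} (u v : Fin n) (p : (pathGraph n).Walk u v) :
    (u.val - v.val) + (v.val - u.val) ≤ p.length := by
  induction p with
  | nil => simp
  | cons h p ih =>
    rw [pathGraph_adj] at h
    simp only [SimpleGraph.Walk.length_cons]
    omega

lemma pg_dist_le {n : ℕ} (m : ℕ) : ∀ (u v : Fin n), u.val + m = v.val →
    (pathGraph n).dist u v ≤ m := by
  induction m with
  | zero => intro u v h; have : u = v := Fin.ext (by omega); simp [this]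
  | succ m ih =>
    intro u v h
    have hn : u.val + 1 < n := by omega
    set w : Fin n := ⟨u.val + 1, hn⟩ with hw
    have hadj : (pathGraph n).Adj u w := by rw [pathGraph_adj]; left; rfl
    have hconn : (pathGraph n).Connected := by
      obtain ⟨k, rfl⟩ : ∃ k, n = k + 1 := ⟨n - 1, by omega⟩
      exact pathGraph_connected k
    calc (pathGraph n).dist u v ≤ (pathGraph n).dist u w + (pathGraph n).dist w v :=
          hconn.dist_triangle
      _ ≤ 1 + m := by
          have h1 : (pathGraph n).dist u w = 1 := dist_eq_one_iff_adj.mpr hadj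
          have h2 : (pathGraph n).dist w v ≤ m := ih w v (by simp [hw]; omega)
          omega
      _ = m + 1 := by omega

lemma pg_dist {n : ℕ} (u v : Fin n) :
    (pathGraph n).dist u v = (u.val - v.val) + (v.val - u.val) := by
  have hpos := u.isLt
  have hconn : (pathGraph n).Connected := by
    obtain ⟨k, rfl⟩ : ∃ k, n = k + 1 := ⟨n - 1, by omega⟩
    exact pathGraph_connected k
  have hle : (pathGraph n).dist u v ≤ (u.val - v.val) + (v.val - u.val) := by
    rcases le_or_gt u.val v.val with h | h
    · have := pg_dist_le (v.val - u.val) u v (by omega)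
      omega
    · have := pg_dist_le (u.val - v.val) v u (by omega)
      rw [SimpleGraph.dist_comm]
      omega
  have hge : (u.val - v.val) + (v.val - u.val) ≤ (pathGraph n).dist u v := by
    obtain ⟨p, hp⟩ := (hconn u v).exists_walk_length_eq_dist
    rw [← hp]; exact pg_walk_le u v p
  omega

lemma pg_two_ecc {n : ℕ} (hn : 2 ≤ n) (v : Fin n) :
    n - 1 ≤ 2 * ecc (pathGraph n) v := by
  have h0 : (pathGraph n).dist v ⟨0, by omega⟩ ≤ ecc (pathGraph n) v :=
    Finset.le_sup (Finset.mem_univ _)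
  have h1 : (pathGraph n).dist v ⟨n - 1, by omega⟩ ≤ ecc (pathGraph n) v :=
    Finset.le_sup (Finset.mem_univ _)
  rw [pg_dist] at h0 h1
  simp only at h0 h1
  have := v.isLt
  omega

lemma pg_ecc_le {n : ℕ} (v : Fin n) :
    ecc (pathGraph n) v ≤ max v.val (n - 1 - v.val) := by
  apply Finset.sup_le
  intro u _
  rw [pg_dist]
  have := u.isLt
  have := v.isLt
  omega

/-- The target value. -/
def target (n : ℕ) : ℕ :=
  if n % 8 = 0 then n / 4 else if n % 8 ≤ 3 then 2 * (n / 8) + 1 else 2 * (n / 8) + 2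

lemma pack_sep {n : ℕ} {f : Fin n → ℕ} (hp : IsPacking (pathGraph n) f)
    (v y : Fin n) (hv : 1 ≤ f v) (hy : 1 ≤ f y) (hne : v ≠ y) :
    f v + f y + 1 ≤ (v.val - y.val) + (y.val - v.val) := by
  by_contra hc
  push_neg at hc
  have hvy : v.val ≠ y.val := fun h => hne (Fin.ext h)
  -- construct a vertex z in both balls
  obtain ⟨z, hz1, hz2⟩ : ∃ z : Fin n,
      (z.val - v.val) + (v.val - z.val) ≤ f v ∧ (z.val - y.val) + (y.val - z.val) ≤ f y := by
    rcases le_total v.val y.val with h | h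
    · exact ⟨⟨min (v.val + f v) y.val, by have := y.isLt; omega⟩, by simp; omega, by simp; omega⟩
    · exact ⟨⟨min (y.val + f y) v.val, by have := v.isLt; omega⟩, by simp; omega, by simp; omega⟩
  have hmem1 : v ∈ hears (pathGraph n) f z := ⟨hv, by rw [pg_dist]; omega⟩
  have hmem2 : y ∈ hears (pathGraph n) f z := ⟨hy, by rw [pg_dist]; omega⟩
  exact hne (hp.2 z hmem1 hmem2)

lemma not_packing_of_max {n : ℕ} {f g : Fin n → ℕ}
    (hm : IsMaximalPacking (pathGraph n) f) (hge : ∀ v, f v ≤ g v) (hne : g ≠ f)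
    (hb : IsBroadcast (pathGraph n) g) :
    ∃ w x y, x ≠ y ∧ x ∈ hears (pathGraph n) g w ∧ y ∈ hears (pathGraph n) g w := by
  by_contra hc
  push_neg at hc
  refine hne (hm.2 g ⟨hb, fun w a ha b hb' => ?_⟩ hge)
  by_contra hab
  exact (hc w a b hab ha) hb'

lemma max_unc {n : ℕ} (hn : 2 ≤ n) {f : Fin n → ℕ}
    (hm : IsMaximalPacking (pathGraph n) f) (u : Fin n)
    (hu : ∀ v, 1 ≤ f v → f v < (u.val - v.val) + (v.val - u.val)) :
    ∃ v, 1 ≤ f v ∧ (u.val - v.val) + (v.val - u.val) = f v + 1 := by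
  classical
  have hfu : f u = 0 := by
    by_contra h
    have := hu u (by omega)
    omega
  set g := Function.update f u 1 with hg
  have hgf : ∀ v, f v ≤ g v := by
    intro v
    by_cases h : v = u
    · subst h; simp [hg, hfu]
    · simp [hg, Function.update_of_ne h]
  have hgb : IsBroadcast (pathGraph n) g := by
    intro v
    by_cases h : v = u
    · subst h; simp only [hg, Function.update_self]
      have := pg_two_ecc hn v; omega
    · simp only [hg, Function.update_of_ne h]; exact hm.1.1 v
  have hgne : g ≠ f := by
    intro h
    have : g u = f u := by rw [h]
    simp [hg, hfu] at this
  obtain ⟨w, x, y, hxy, hx, hy⟩ := not_packing_of_max hm hgf hgne hgb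
  -- one of x, y must be u
  have key : ∀ z, z ∈ hears (pathGraph n) g w → z ≠ u → z ∈ hears (pathGraph n) f z → True := fun _ _ _ _ => trivial
  have hmemf : ∀ z, z ≠ u → z ∈ hears (pathGraph n) g w → z ∈ hears (pathGraph n) f w := by
    intro z hz hmem
    obtain ⟨h1, h2⟩ := hmem
    rw [hg, Function.update_of_ne hz] at h1 h2
    exact ⟨h1, h2⟩
  have hcase : x = u ∨ y = u := by
    by_contra hc
    push_neg at hc
    exact hxy (hm.1.2 w (hmemf x hc.1 hx) (hmemf y hc.2 hy))
  -- wlog x = u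
  obtain ⟨t, ht, htu⟩ : ∃ t, t ∈ hears (pathGraph n) f w ∧ t ≠ u := by
    rcases hcase with h | h
    · subst h
      exact ⟨y, hmemf y hxy.symm hy, hxy.symm⟩
    · subst h
      exact ⟨x, hmemf x hxy hx, hxy⟩
  have hwu : (pathGraph n).dist w u ≤ 1 := by
    rcases hcase with h | h
    · have := hx; rw [h] at this; obtain ⟨_, h2⟩ := this
      simpa [hg] using h2
    · have := hy; rw [h] at this; obtain ⟨_, h2⟩ := this
      simpa [hg] using h2
  obtain ⟨ht1, ht2⟩ := ht
  rw [pg_dist] at ht2 hwu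
  refine ⟨t, ht1, ?_⟩
  have := hu t ht1
  omega

lemma max_touch {n : ℕ} {f : Fin n → ℕ}
    (hm : IsMaximalPacking (pathGraph n) f) (v : Fin n) (hv : 1 ≤ f v)
    (hne : f v ≠ ecc (pathGraph n) v) :
    ∃ y, 1 ≤ f y ∧ y ≠ v ∧ (v.val - y.val) + (y.val - v.val) = f v + f y + 1 := by
  classical
  set g := Function.update f v (f v + 1) with hg
  have hgf : ∀ z, f z ≤ g z := by
    intro z
    by_cases h : z = v
    · subst h; simp [hg]
    · simp [hg, Function.update_of_ne h]
  have hgb : IsBroadcast (pathGraph n) g := by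
    intro z
    by_cases h : z = v
    · subst h; simp only [hg, Function.update_self]
      have := hm.1.1 z; omega
    · simp only [hg, Function.update_of_ne h]; exact hm.1.1 z
  have hgne : g ≠ f := by
    intro h
    have : g v = f v := by rw [h]
    simp [hg] at this
  obtain ⟨w, x, y, hxy, hx, hy⟩ := not_packing_of_max hm hgf hgne hgb
  have hmemf : ∀ z, z ≠ v → z ∈ hears (pathGraph n) g w → z ∈ hears (pathGraph n) f w := by
    intro z hz hmem
    obtain ⟨h1, h2⟩ := hmem
    rw [hg, Function.update_of_ne hz] at h1 h2
    exact ⟨h1, h2⟩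
  have hcase : x = v ∨ y = v := by
    by_contra hc
    push_neg at hc
    exact hxy (hm.1.2 w (hmemf x hc.1 hx) (hmemf y hc.2 hy))
  obtain ⟨t, ht, htv⟩ : ∃ t, t ∈ hears (pathGraph n) f w ∧ t ≠ v := by
    rcases hcase with h | h
    · subst h; exact ⟨y, hmemf y hxy.symm hy, hxy.symm⟩
    · subst h; exact ⟨x, hmemf x hxy hx, hxy⟩
  have hwv : (pathGraph n).dist w v ≤ f v + 1 := by
    rcases hcase with h | h
    · have := hx; rw [h] at this; obtain ⟨_, h2⟩ := this
      simpa [hg] using h2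
    · have := hy; rw [h] at this; obtain ⟨_, h2⟩ := this
      simpa [hg] using h2
  -- distance w v cannot be ≤ f v, otherwise v, t both heard by w under f
  have hwv2 : ¬ (pathGraph n).dist w v ≤ f v := by
    intro hle
    exact htv (hm.1.2 w ht ⟨hv, hle⟩)
  obtain ⟨ht1, ht2⟩ := ht
  have hsep := pack_sep hm.1 v t hv ht1 (Ne.symm htv)
  rw [pg_dist] at ht2 hwv hwv2
  refine ⟨t, ht1, htv, ?_⟩
  omega

lemma lower_bound {n : ℕ} (hn : 2 ≤ n) {f : Fin n → ℕ}
    (hm : IsMaximalPacking (pathGraph n) f) : target n ≤ cost f := by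
  classical
  set σ := cost f with hσ
  set S := Finset.univ.filter (fun v : Fin n => 1 ≤ f v) with hSdef
  set k := S.card with hk
  have hσS : ∑ v ∈ S, f v = σ := by
    rw [hσ, hSdef]
    unfold cost
    rw [← Finset.sum_filter_add_sum_filter_not Finset.univ (fun v => 1 ≤ f v) f]
    have : ∑ v ∈ Finset.univ.filter (fun v : Fin n => ¬ 1 ≤ f v), f v = 0 := by
      apply Finset.sum_eq_zero
      intro v hv
      have := (Finset.mem_filter.1 hv).2
      omega
    omega
  have hkσ : k ≤ σ := by
    rw [← hσS, hk]
    calc S.card = ∑ _v ∈ S, 1 := by simp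
      _ ≤ ∑ v ∈ S, f v := Finset.sum_le_sum (fun v hv => (Finset.mem_filter.1 hv).2)
  -- covered / uncovered
  set Cov := Finset.univ.filter
    (fun u : Fin n => ∃ v, 1 ≤ f v ∧ (u.val - v.val) + (v.val - u.val) ≤ f v) with hCovdef
  set Unc := Finset.univ.filter
    (fun u : Fin n => ¬ ∃ v, 1 ≤ f v ∧ (u.val - v.val) + (v.val - u.val) ≤ f v) with hUncdef
  have hpart : Cov.card + Unc.card = n := by
    rw [hCovdef, hUncdef, Finset.card_filter_add_card_filter_not]
    simp
  have hCov : Cov.card ≤ 2 * σ + k := by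
    have hsub : Cov ⊆ S.biUnion (fun v =>
        Finset.univ.filter (fun u : Fin n => (u.val - v.val) + (v.val - u.val) ≤ f v)) := by
      intro u hu
      obtain ⟨v, hv1, hv2⟩ := (Finset.mem_filter.1 hu).2
      exact Finset.mem_biUnion.2 ⟨v, Finset.mem_filter.2 ⟨Finset.mem_univ _, hv1⟩,
        Finset.mem_filter.2 ⟨Finset.mem_univ _, hv2⟩⟩
    calc Cov.card ≤ _ := Finset.card_le_card hsub
      _ ≤ ∑ v ∈ S, (Finset.univ.filter
          (fun u : Fin n => (u.val - v.val) + (v.val - u.val) ≤ f v)).card :=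
        Finset.card_biUnion_le
      _ ≤ ∑ v ∈ S, (2 * f v + 1) := by
        apply Finset.sum_le_sum
        intro v _
        have : (Finset.univ.filter
            (fun u : Fin n => (u.val - v.val) + (v.val - u.val) ≤ f v)).card ≤
            (Finset.Icc (v.val - f v) (v.val + f v)).card := by
          apply Finset.card_le_card_of_injOn (fun u => u.val)
          · intro u hu
            have := (Finset.mem_filter.1 hu).2
            simp only [Finset.mem_coe, Finset.mem_Icc]
            omega
          · intro a _ b _ hab
            exact Fin.ext hab
        rw [Nat.card_Icc] at this
        omega
      _ = 2 * σ + k := by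
        rw [Finset.sum_add_distrib, ← Finset.mul_sum, hσS]
        simp [hk]
  -- left/right touching sets
  set Rset := S.filter (fun v => ∃ y : Fin n, 1 ≤ f y ∧ v.val + f v + f y + 1 = y.val) with hRdef
  set Lset := S.filter (fun v => ∃ y : Fin n, 1 ≤ f y ∧ y.val + f y + f v + 1 = v.val) with hLdef
  have hfS : ∀ v ∈ S, 1 ≤ f v := fun v hv => (Finset.mem_filter.1 hv).2
  have hRL : Rset.card = Lset.card := by
    apply le_antisymm
    · set ρ : Fin n → Fin n := fun v =>
        if h : ∃ y : Fin n, 1 ≤ f y ∧ v.val + f v + f y + 1 = y.val then h.choose else v with hρ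
      apply Finset.card_le_card_of_injOn ρ
      · intro v hv
        obtain ⟨hvS, hex⟩ := Finset.mem_filter.1 hv
        have hspec := hex.choose_spec
        rw [hρ]
        simp only [dif_pos hex]
        refine Finset.mem_filter.2 ⟨Finset.mem_filter.2 ⟨Finset.mem_univ _, hspec.1⟩,
          ⟨v, hfS v hvS, by omega⟩⟩
      · intro a ha b hb hab
        obtain ⟨haS, hexa⟩ := Finset.mem_filter.1 ha
        obtain ⟨hbS, hexb⟩ := Finset.mem_filter.1 hb
        have hsa := hexa.choose_spec
        have hsb := hexb.choose_spec
        rw [hρ] at hab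
        simp only [dif_pos hexa, dif_pos hexb] at hab
        by_contra hne
        have hsep := pack_sep hm.1 a b (hfS a haS) (hfS b hbS) hne
        have : hexa.choose.val = hexb.choose.val := by rw [hab]
        have : f hexa.choose = f hexb.choose := by rw [hab]
        omega
    · set ρ : Fin n → Fin n := fun v =>
        if h : ∃ y : Fin n, 1 ≤ f y ∧ y.val + f y + f v + 1 = v.val then h.choose else v with hρ
      apply Finset.card_le_card_of_injOn ρ
      · intro v hv
        obtain ⟨hvS, hex⟩ := Finset.mem_filter.1 hv
        have hspec := hex.choose_spec
        rw [hρ]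
        simp only [dif_pos hex]
        refine Finset.mem_filter.2 ⟨Finset.mem_filter.2 ⟨Finset.mem_univ _, hspec.1⟩,
          ⟨v, hfS v hvS, by omega⟩⟩
      · intro a ha b hb hab
        obtain ⟨haS, hexa⟩ := Finset.mem_filter.1 ha
        obtain ⟨hbS, hexb⟩ := Finset.mem_filter.1 hb
        have hsa := hexa.choose_spec
        have hsb := hexb.choose_spec
        rw [hρ] at hab
        simp only [dif_pos hexa, dif_pos hexb] at hab
        by_contra hne
        have hsep := pack_sep hm.1 a b (hfS a haS) (hfS b hbS) hne
        have : hexa.choose.val = hexb.choose.val := by rw [hab]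
        have : f hexa.choose = f hexb.choose := by rw [hab]
        omega
  by_cases hecc : ∃ v, 1 ≤ f v ∧ f v = ecc (pathGraph n) v
  · obtain ⟨v, hv1, hv2⟩ := hecc
    have h1 : f v ≤ σ := by
      rw [← hσ.symm]
      exact Finset.single_le_sum (f := f) (fun i _ => Nat.zero_le _) (Finset.mem_univ v)
    have h2 := pg_two_ecc hn v
    unfold target
    split_ifs <;> omega
  · push_neg at hecc
    have hSRL : S ⊆ Rset ∪ Lset := by
      intro v hvS
      have hv := hfS v hvS
      obtain ⟨y, hy1, hyne, heq⟩ := max_touch hm v hv (hecc v hv)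
      have hvals : v.val ≠ y.val := fun h => hyne (Fin.ext h.symm)
      rcases Nat.lt_or_ge v.val y.val with h | h
      · exact Finset.mem_union_left _ (Finset.mem_filter.2 ⟨hvS, y, hy1, by omega⟩)
      · exact Finset.mem_union_right _ (Finset.mem_filter.2 ⟨hvS, y, hy1, by omega⟩)
    have hk2m : k ≤ Rset.card + Lset.card :=
      (Finset.card_le_card hSRL).trans (Finset.card_union_le _ _)
    -- uncovered injection
    set Blk := Rset.image (fun v => (v, true)) ∪ Lset.image (fun v => (v, false)) with hBlkdef
    set T := (S ×ˢ (Finset.univ : Finset Bool)) \ Blk with hTdef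
    have hBlksub : Blk ⊆ S ×ˢ (Finset.univ : Finset Bool) := by
      intro p hp
      rcases Finset.mem_union.1 hp with h | h <;>
        obtain ⟨v, hv, rfl⟩ := Finset.mem_image.1 h
      · exact Finset.mem_product.2 ⟨Finset.filter_subset _ _ hv, Finset.mem_univ _⟩
      · exact Finset.mem_product.2 ⟨Finset.filter_subset _ _ hv, Finset.mem_univ _⟩
    have hinj1 : Function.Injective (fun v : Fin n => (v, true)) :=
      fun a b hab => (Prod.ext_iff.1 hab).1
    have hinj2 : Function.Injective (fun v : Fin n => (v, false)) :=
      fun a b hab => (Prod.ext_iff.1 hab).1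
    have hdisj : Disjoint (Rset.image (fun v => (v, true)))
        (Lset.image (fun v => (v, false))) := by
      simp only [Finset.disjoint_left]
      intro p hp hq
      obtain ⟨v, _, rfl⟩ := Finset.mem_image.1 hp
      obtain ⟨w, _, hw⟩ := Finset.mem_image.1 hq
      exact Bool.false_ne_true ((Prod.ext_iff.1 hw).2)
    have hBlkcard : Blk.card = Rset.card + Lset.card := by
      rw [hBlkdef, Finset.card_union_of_disjoint hdisj,
        Finset.card_image_of_injective _ hinj1, Finset.card_image_of_injective _ hinj2]
    have hTcard : T.card = 2 * k - (Rset.card + Lset.card) := by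
      rw [hTdef, Finset.card_sdiff_of_subset hBlksub, hBlkcard, Finset.card_product]
      simp [hk, mul_comm]
    have hBlkle : Rset.card + Lset.card ≤ 2 * k := by
      rw [← hBlkcard]
      have := Finset.card_le_card hBlksub
      rw [Finset.card_product] at this
      simpa [hk, mul_comm] using this
    set φ : Fin n → Fin n × Bool := fun u =>
      if h : ∃ v, 1 ≤ f v ∧ (u.val - v.val) + (v.val - u.val) = f v + 1
      then (h.choose, decide (h.choose.val < u.val)) else (u, true) with hφ
    have hUexists : ∀ u ∈ Unc, ∃ v, 1 ≤ f v ∧ (u.val - v.val) + (v.val - u.val) = f v + 1 := by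
      intro u hu
      have hu' := (Finset.mem_filter.1 hu).2
      push_neg at hu'
      exact max_unc hn hm u (fun v hv => by have := hu' v hv; omega)
    have hUnotcov : ∀ u ∈ Unc, ∀ v, 1 ≤ f v → f v < (u.val - v.val) + (v.val - u.val) := by
      intro u hu v hv
      have hu' := (Finset.mem_filter.1 hu).2
      push_neg at hu'
      have := hu' v hv
      omega
    have hUnc : Unc.card ≤ T.card := by
      apply Finset.card_le_card_of_injOn φ
      · intro u hu
        have hex := hUexists u hu
        have hspec := hex.choose_spec
        rw [hφ]
        simp only [dif_pos hex]
        set v := hex.choose with hvdef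
        rw [hTdef, Finset.mem_coe, Finset.mem_sdiff]
        constructor
        · exact Finset.mem_product.2
            ⟨Finset.mem_filter.2 ⟨Finset.mem_univ _, hspec.1⟩, Finset.mem_univ _⟩
        · intro hmem
          rcases Finset.mem_union.1 hmem with h | h
          · obtain ⟨w, hw, hweq⟩ := Finset.mem_image.1 h
            rw [Prod.mk.injEq] at hweq
            obtain ⟨hw1, hw2⟩ := hweq
            have hwv : w.val = v.val := congrArg Fin.val hw1
            have hfw : f w = f v := by rw [hw1]
            have hlt : v.val < u.val := of_decide_eq_true hw2.symm
            obtain ⟨y, hy1, hyeq⟩ := (Finset.mem_filter.1 hw).2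
            have hsp1 := hspec.1
            have hsp2 := hspec.2
            have hcov : (u.val - y.val) + (y.val - u.val) ≤ f y := by omega
            have := hUnotcov u hu y hy1
            omega
          · obtain ⟨w, hw, hweq⟩ := Finset.mem_image.1 h
            rw [Prod.mk.injEq] at hweq
            obtain ⟨hw1, hw2⟩ := hweq
            have hwv : w.val = v.val := congrArg Fin.val hw1
            have hfw : f w = f v := by rw [hw1]
            have hge : ¬ v.val < u.val := by
              intro hlt
              rw [decide_eq_true hlt] at hw2
              exact Bool.false_ne_true hw2
            obtain ⟨y, hy1, hyeq⟩ := (Finset.mem_filter.1 hw).2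
            have hsp1 := hspec.1
            have hsp2 := hspec.2
            have hcov : (u.val - y.val) + (y.val - u.val) ≤ f y := by omega
            have := hUnotcov u hu y hy1
            omega
      · intro a ha b hb hab
        have hexa := hUexists a ha
        have hexb := hUexists b hb
        have hsa := hexa.choose_spec
        have hsb := hexb.choose_spec
        rw [hφ] at hab
        simp only [dif_pos hexa, dif_pos hexb] at hab
        rw [Prod.mk.injEq] at hab
        obtain ⟨h1, h2⟩ := hab
        rw [h1] at hsa
        have hanev : hexb.choose.val ≠ a.val := by
          intro h
          have := hsa.2
          omega
        have hbnev : hexb.choose.val ≠ b.val := by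
          intro h
          have := hsb.2
          omega
        rw [h1] at h2
        rw [decide_eq_decide] at h2
        apply Fin.ext
        rcases Nat.lt_or_ge hexb.choose.val a.val with h | h
        · have hb' : hexb.choose.val < b.val := h2.mp h
          have := hsa.2
          have := hsb.2
          omega
        · have hb' : ¬ hexb.choose.val < b.val := fun hh => by
            have := h2.mpr hh; omega
          have := hsa.2
          have := hsb.2
          omega
    -- final arithmetic
    have hfinal : n ≤ 2 * σ + k + (2 * k - (Rset.card + Lset.card)) := by
      rw [← hTcard]
      omega
    unfold target
    split_ifs <;> omega

/-- The set of ball centers for the construction (when `4 ≤ n`). -/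
def Cp (n x : ℕ) : Prop :=
  (x < 8 * (n / 8) ∧ (x % 8 = 2 ∨ x % 8 = 5)) ∨
  (1 ≤ n % 8 ∧ n % 8 ≤ 6 ∧ x = 8 * (n / 8)) ∨
  (4 ≤ n % 8 ∧ n % 8 ≤ 6 ∧ x = 8 * (n / 8) + 3) ∨
  (n % 8 = 7 ∧ (x = 8 * (n / 8) + 1 ∨ x = 8 * (n / 8) + 4))

instance (n x : ℕ) : Decidable (Cp n x) := by unfold Cp; infer_instance

lemma Cp_lt {n x : ℕ} (hn : 4 ≤ n) (h : Cp n x) : x < n := by unfold Cp at h; omega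

lemma Cp_sep {n x y : ℕ} (hx : Cp n x) (hy : Cp n y) (hne : x ≠ y) :
    x + 3 ≤ y ∨ y + 3 ≤ x := by
  unfold Cp at hx hy; omega

lemma Cp_cover {n u : ℕ} (hn : 4 ≤ n) (hu : u < n) :
    ∃ x, Cp n x ∧ x < n ∧ x ≤ u + 2 ∧ u ≤ x + 2 := by
  by_cases h : u < 8 * (n / 8)
  · by_cases h2 : u % 8 ≤ 4
    · exact ⟨8 * (u / 8) + 2, by unfold Cp; omega⟩
    · exact ⟨8 * (u / 8) + 5, by unfold Cp; omega⟩
  · by_cases h1 : n % 8 ≤ 3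
    · exact ⟨8 * (n / 8), by unfold Cp; omega⟩
    · by_cases h2 : n % 8 ≤ 6
      · by_cases h3 : u ≤ 8 * (n / 8) + 2
        · exact ⟨8 * (n / 8), by unfold Cp; omega⟩
        · exact ⟨8 * (n / 8) + 3, by unfold Cp; omega⟩
      · by_cases h3 : u ≤ 8 * (n / 8) + 3
        · exact ⟨8 * (n / 8) + 1, by unfold Cp; omega⟩
        · exact ⟨8 * (n / 8) + 4, by unfold Cp; omega⟩

lemma Cp_touch {n x : ℕ} (hn : 4 ≤ n) (hx : Cp n x) :
    ∃ y, Cp n y ∧ y < n ∧ (x + 3 = y ∨ y + 3 = x) := by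
  unfold Cp at hx
  rcases hx with ⟨h1, h2 | h2⟩ | ⟨h1, h2, h3⟩ | ⟨h1, h2, h3⟩ | ⟨h1, h2 | h2⟩
  · exact ⟨x + 3, by unfold Cp; omega⟩
  · exact ⟨x - 3, by unfold Cp; omega⟩
  · by_cases h4 : 4 ≤ n % 8
    · exact ⟨8 * (n / 8) + 3, by unfold Cp; omega⟩
    · exact ⟨8 * (n / 8) - 3, by unfold Cp; omega⟩
  · exact ⟨8 * (n / 8), by unfold Cp; omega⟩
  · exact ⟨8 * (n / 8) + 4, by unfold Cp; omega⟩
  · exact ⟨8 * (n / 8) + 1, by unfold Cp; omega⟩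

/-- The construction is a maximal packing (case `4 ≤ n`). -/
lemma construct_max {n : ℕ} (hn : 4 ≤ n) :
    IsMaximalPacking (pathGraph n) (fun v : Fin n => if Cp n v.val then 1 else 0) := by
  set f : Fin n → ℕ := fun v => if Cp n v.val then 1 else 0 with hf
  have hn2 : 2 ≤ n := by omega
  have hf1 : ∀ v : Fin n, f v ≤ 1 := by
    intro v; simp only [hf]; split <;> omega
  have hfv : ∀ v : Fin n, 1 ≤ f v → Cp n v.val ∧ f v = 1 := by
    intro v h
    simp only [hf] at h ⊢
    by_cases hc : Cp n v.val
    · exact ⟨hc, if_pos hc⟩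
    · rw [if_neg hc] at h; omega
  have hCf : ∀ v : Fin n, Cp n v.val → f v = 1 := by
    intro v h; simp only [hf]; exact if_pos h
  have hecc1 : ∀ v : Fin n, 1 ≤ ecc (pathGraph n) v := by
    intro v; have := pg_two_ecc hn2 v; omega
  have hbr : IsBroadcast (pathGraph n) f := fun v => le_trans (hf1 v) (hecc1 v)
  have hpack : IsPacking (pathGraph n) f := by
    refine ⟨hbr, fun u x hx y hy => ?_⟩
    obtain ⟨hx1, hx2⟩ := hx
    obtain ⟨hy1, hy2⟩ := hy
    obtain ⟨hcx, hfx⟩ := hfv x hx1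
    obtain ⟨hcy, hfy⟩ := hfv y hy1
    rw [pg_dist] at hx2 hy2
    rw [hfx] at hx2
    rw [hfy] at hy2
    by_contra hne
    have hvne : x.val ≠ y.val := fun h => hne (Fin.ext h)
    have := Cp_sep hcx hcy hvne
    omega
  refine ⟨hpack, fun g hg hge => ?_⟩
  funext v
  by_contra hne
  have hlt : f v < g v := lt_of_le_of_ne (hge v) (fun h => hne h.symm)
  by_cases hcv : Cp n v.val
  · -- v is a center; increasing its radius overlaps the touching partner
    have hfv1 : f v = 1 := hCf v hcv
    have hgv : 2 ≤ g v := by omega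
    obtain ⟨y, hcy, hylt, hcase⟩ := Cp_touch hn hcv
    set yF : Fin n := ⟨y, hylt⟩ with hyF
    have hyFv : yF.val = y := rfl
    have hgy : 1 ≤ g yF := le_trans (le_of_eq (hCf yF hcy).symm) (hge yF)
    obtain ⟨zv, hzlt, hz1, hz2⟩ : ∃ zv, zv < n ∧
        (zv - v.val) + (v.val - zv) ≤ 2 ∧ (zv - y) + (y - zv) ≤ 1 := by
      rcases hcase with h | h
      · exact ⟨v.val + 2, by omega, by omega, by omega⟩
      · exact ⟨v.val - 2, by have := v.isLt; omega, by omega, by omega⟩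
    set z : Fin n := ⟨zv, hzlt⟩ with hz
    have hzv : z.val = zv := rfl
    have hm1 : v ∈ hears (pathGraph n) g z := ⟨by omega, by rw [pg_dist]; omega⟩
    have hm2 : yF ∈ hears (pathGraph n) g z := ⟨hgy, by rw [pg_dist]; omega⟩
    have heq : v = yF := hg.2 z hm1 hm2
    have : v.val = y := by rw [heq]
    omega
  · -- v is not a center
    have hfv0 : f v = 0 := by simp only [hf]; exact if_neg hcv
    have hgv : 1 ≤ g v := by omega
    obtain ⟨x, hcx, hxlt, hxb1, hxb2⟩ := Cp_cover hn v.isLt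
    set xF : Fin n := ⟨x, hxlt⟩ with hxF
    have hxFv : xF.val = x := rfl
    have hgx : 1 ≤ g xF := le_trans (le_of_eq (hCf xF hcx).symm) (hge xF)
    have hvx : v.val ≠ x := fun h => hcv (h ▸ hcx)
    by_cases hd : (v.val - x) + (x - v.val) ≤ 1
    · -- v hears both itself and xF
      have hm1 : v ∈ hears (pathGraph n) g v := ⟨hgv, by rw [pg_dist]; omega⟩
      have hm2 : xF ∈ hears (pathGraph n) g v := ⟨hgx, by rw [pg_dist]; omega⟩
      have heq : v = xF := hg.2 v hm1 hm2
      have : v.val = x := by rw [heq]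
      omega
    · -- distance is exactly 2; midpoint hears both
      obtain ⟨zv, hzlt, hz1, hz2⟩ : ∃ zv, zv < n ∧
          (zv - v.val) + (v.val - zv) ≤ 1 ∧ (zv - x) + (x - zv) ≤ 1 := by
        rcases Nat.lt_or_ge v.val x with h | h
        · exact ⟨v.val + 1, by omega, by omega, by omega⟩
        · exact ⟨x + 1, by omega, by omega, by omega⟩
      set z : Fin n := ⟨zv, hzlt⟩ with hz
      have hzv : z.val = zv := rfl
      have hm1 : v ∈ hears (pathGraph n) g z := ⟨hgv, by rw [pg_dist]; omega⟩
      have hm2 : xF ∈ hears (pathGraph n) g z := ⟨hgx, by rw [pg_dist]; omega⟩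
      have heq : v = xF := hg.2 z hm1 hm2
      have : v.val = x := by rw [heq]
      omega

lemma sum_mod (q : ℕ) :
    ∑ x ∈ Finset.range (8 * q), (if x % 8 = 2 ∨ x % 8 = 5 then (1 : ℕ) else 0) = 2 * q := by
  induction q with
  | zero => simp
  | succ q ih =>
    rw [show 8 * (q + 1) = (8 * q) + 1 + 1 + 1 + 1 + 1 + 1 + 1 + 1 from by ring]
    rw [Finset.sum_range_succ, Finset.sum_range_succ, Finset.sum_range_succ,
      Finset.sum_range_succ, Finset.sum_range_succ, Finset.sum_range_succ,
      Finset.sum_range_succ, Finset.sum_range_succ, ih]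
    have e : ∀ (j : ℕ), ¬(j % 8 = 2 ∨ j % 8 = 5) →
        (if j % 8 = 2 ∨ j % 8 = 5 then (1 : ℕ) else 0) = 0 := fun j h => if_neg h
    have e' : ∀ (j : ℕ), (j % 8 = 2 ∨ j % 8 = 5) →
        (if j % 8 = 2 ∨ j % 8 = 5 then (1 : ℕ) else 0) = 1 := fun j h => if_pos h
    rw [e (8 * q) (by omega), e (8 * q + 1) (by omega), e' (8 * q + 1 + 1) (by omega),
      e (8 * q + 1 + 1 + 1) (by omega), e (8 * q + 1 + 1 + 1 + 1) (by omega),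
      e' (8 * q + 1 + 1 + 1 + 1 + 1) (by omega), e (8 * q + 1 + 1 + 1 + 1 + 1 + 1) (by omega),
      e (8 * q + 1 + 1 + 1 + 1 + 1 + 1 + 1) (by omega)]
    omega

lemma construct_cost {n : ℕ} (hn : 4 ≤ n) :
    cost (fun v : Fin n => if Cp n v.val then 1 else 0) = target n := by
  unfold cost
  rw [Fin.sum_univ_eq_sum_range (fun x => if Cp n x then (1 : ℕ) else 0) n]
  have hpt : ∀ x, (if Cp n x then (1 : ℕ) else 0) =
      (if x < 8 * (n / 8) ∧ (x % 8 = 2 ∨ x % 8 = 5) then 1 else 0) +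
      ((if (1 ≤ n % 8 ∧ n % 8 ≤ 6) ∧ x = 8 * (n / 8) then 1 else 0) +
       ((if (4 ≤ n % 8 ∧ n % 8 ≤ 6) ∧ x = 8 * (n / 8) + 3 then 1 else 0) +
        ((if n % 8 = 7 ∧ x = 8 * (n / 8) + 1 then 1 else 0) +
         (if n % 8 = 7 ∧ x = 8 * (n / 8) + 4 then 1 else 0)))) := by
    intro x; by_cases hc : Cp n x <;> simp only [hc, if_true, if_false] <;> unfold Cp at hc <;> split_ifs <;> omega
  rw [Finset.sum_congr rfl (fun x _ => hpt x)]
  rw [Finset.sum_add_distrib, Finset.sum_add_distrib, Finset.sum_add_distrib,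
    Finset.sum_add_distrib]
  have hS1 : ∑ x ∈ Finset.range n,
      (if x < 8 * (n / 8) ∧ (x % 8 = 2 ∨ x % 8 = 5) then (1 : ℕ) else 0) = 2 * (n / 8) := by
    have hsub : Finset.range (8 * (n / 8)) ⊆ Finset.range n :=
      Finset.range_subset_range.2 (by omega)
    rw [← Finset.sum_subset hsub (fun x _ hx => by
      rw [if_neg]
      intro ⟨h1, _⟩
      exact hx (Finset.mem_range.2 h1))]
    rw [← sum_mod (n / 8)]
    apply Finset.sum_congr rfl
    intro x hx
    have hxlt : x < 8 * (n / 8) := Finset.mem_range.1 hx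
    by_cases hp : x % 8 = 2 ∨ x % 8 = 5
    · rw [if_pos ⟨hxlt, hp⟩, if_pos hp]
    · rw [if_neg (fun h => hp h.2), if_neg hp]
  have hpoint : ∀ (P : Prop) [Decidable P] (a : ℕ),
      ∑ x ∈ Finset.range n, (if P ∧ x = a then (1 : ℕ) else 0) =
        if P ∧ a < n then 1 else 0 := by
    intro P _ a
    have hsw : ∀ x, (if P ∧ x = a then (1 : ℕ) else 0) =
        if x = a then (if P then 1 else 0) else 0 := by
      intro x
      by_cases hp : P
      · by_cases hx : x = a
        · rw [if_pos ⟨hp, hx⟩, if_pos hx, if_pos hp]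
        · rw [if_neg (fun h => hx h.2), if_neg hx]
      · by_cases hx : x = a
        · rw [if_neg (fun h => hp h.1), if_pos hx, if_neg hp]
        · rw [if_neg (fun h => hx h.2), if_neg hx]
    rw [Finset.sum_congr rfl (fun x _ => hsw x)]
    rw [Finset.sum_ite_eq' (Finset.range n) a (fun _ => if P then (1 : ℕ) else 0)]
    by_cases hp : P
    · by_cases ha : a < n
      · rw [if_pos (Finset.mem_range.2 ha), if_pos hp, if_pos ⟨hp, ha⟩]
      · rw [if_neg (fun h => ha (Finset.mem_range.1 h)), if_neg (fun h => ha h.2)]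
    · by_cases ha : a < n
      · rw [if_pos (Finset.mem_range.2 ha), if_neg hp, if_neg (fun h => hp h.1)]
      · rw [if_neg (fun h => ha (Finset.mem_range.1 h)), if_neg (fun h => hp h.1)]
  rw [hS1, hpoint, hpoint, hpoint, hpoint]
  unfold target
  split_ifs <;> omega

lemma small_case {n : ℕ} (h2 : n = 2 ∨ n = 3) :
    IsMaximalPacking (pathGraph n) (fun v : Fin n => if v.val = n - 2 then 1 else 0) ∧
    cost (fun v : Fin n => if v.val = n - 2 then 1 else 0) = 1 := by
  have hn2 : 2 ≤ n := by omega
  set f : Fin n → ℕ := fun v => if v.val = n - 2 then 1 else 0 with hf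
  have hfc : ∀ v : Fin n, 1 ≤ f v → v.val = n - 2 := by
    intro v h
    simp only [hf] at h
    by_cases hc : v.val = n - 2
    · exact hc
    · rw [if_neg hc] at h; omega
  have hf1 : ∀ v : Fin n, f v ≤ 1 := by intro v; simp only [hf]; split <;> omega
  have hecc1 : ∀ v : Fin n, 1 ≤ ecc (pathGraph n) v := by
    intro v; have := pg_two_ecc hn2 v; omega
  have hbr : IsBroadcast (pathGraph n) f := fun v => le_trans (hf1 v) (hecc1 v)
  set c : Fin n := ⟨n - 2, by omega⟩ with hc
  have hcv : c.val = n - 2 := rfl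
  have hfcval : f c = 1 := by simp [hf, hcv]
  refine ⟨⟨⟨hbr, fun u x hx y hy => ?_⟩, fun g hg hge => ?_⟩, ?_⟩
  · have hx1 := hfc x hx.1
    have hy1 := hfc y hy.1
    exact Fin.ext (hx1.trans hy1.symm)
  · funext v
    by_contra hne
    have hlt : f v < g v := lt_of_le_of_ne (hge v) (fun h => hne h.symm)
    by_cases hvc : v.val = n - 2
    · have : f v = 1 := by simp only [hf]; rw [if_pos hvc]
      have hg2 : 2 ≤ g v := by omega
      have := hg.1 v
      have := pg_ecc_le v
      have := v.isLt
      rcases h2 with h | h <;> omega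
    · have hfv0 : f v = 0 := by simp only [hf]; rw [if_neg hvc]
      have hgv : 1 ≤ g v := by omega
      have hgc : 1 ≤ g c := le_trans (le_of_eq hfcval.symm) (hge c)
      have hm1 : v ∈ hears (pathGraph n) g v := ⟨hgv, by rw [pg_dist]; omega⟩
      have hm2 : c ∈ hears (pathGraph n) g v :=
        ⟨hgc, by rw [pg_dist]; have := v.isLt; rcases h2 with h | h <;> omega⟩
      have heq : v = c := hg.2 v hm1 hm2
      have : v.val = n - 2 := by rw [heq]
      exact hvc this
  · unfold cost
    rw [Fin.sum_univ_eq_sum_range (fun x => if x = n - 2 then (1 : ℕ) else 0) n]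
    rw [Finset.sum_ite_eq' (Finset.range n) (n - 2) (fun _ => (1 : ℕ))]
    rw [if_pos (Finset.mem_range.2 (by omega))]

lemma upper_bound {n : ℕ} (hn : 2 ≤ n) :
    ∃ f, IsMaximalPacking (pathGraph n) f ∧ cost f = target n := by
  rcases Nat.lt_or_ge n 4 with h | h
  · have h23 : n = 2 ∨ n = 3 := by omega
    obtain ⟨hmax, hcost⟩ := small_case h23
    refine ⟨_, hmax, ?_⟩
    rw [hcost]
    unfold target
    rcases h23 with h | h <;> subst h <;> norm_num
  · exact ⟨_, construct_max h, construct_cost h⟩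

end PBAux

open Broadcast in
/-- For every integer n ≥ 2: p_b(P_n) = n/4 if n ≡ 0 (mod 8);
p_b(P_n) = 2⌊n/8⌋ + 1 if n ≡ 1, 2, 3 (mod 8);
p_b(P_n) = 2⌊n/8⌋ + 2 if n ≡ 4, 5, 6, 7 (mod 8). -/
theorem lowerBroadcastPacking_pathGraph (n : ℕ) (hn : 2 ≤ n) :
    (n % 8 = 0 → lowerBroadcastPacking (SimpleGraph.pathGraph n) = n / 4) ∧
    (n % 8 = 1 ∨ n % 8 = 2 ∨ n % 8 = 3 →
      lowerBroadcastPacking (SimpleGraph.pathGraph n) = 2 * (n / 8) + 1) ∧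
    (n % 8 = 4 ∨ n % 8 = 5 ∨ n % 8 = 6 ∨ n % 8 = 7 →
      lowerBroadcastPacking (SimpleGraph.pathGraph n) = 2 * (n / 8) + 2) := by
  have key : lowerBroadcastPacking (SimpleGraph.pathGraph n) = PBAux.target n := by
    obtain ⟨f, hf, hc⟩ := PBAux.upper_bound hn
    apply le_antisymm
    · exact Nat.sInf_le ⟨f, hf, hc⟩
    · exact le_csInf ⟨PBAux.target n, f, hf, hc⟩
        (by rintro c ⟨g, hg, rfl⟩; exact PBAux.lower_bound hn hg)
  rw [key]
  unfold PBAux.target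
  refine ⟨fun h => by simp [h], fun h => ?_, fun h => ?_⟩ <;>
    · split_ifs <;> omega
end

section
/- For every integer n ≥ 3, the lower broadcast packing number of the cycle C_n equals n/4 if n ≡ 0 (mod 8), equals 2⌊n/8⌋ + 1 if n ≡ 1, 2 or 3 (mod 8), and equals 2⌊n/8⌋ + 2 if n ≡ 4, 5, 6 or 7 (mod 8). -/
open SimpleGraph

namespace CycleAux

variable {n : ℕ}

/-- forward arc length from `a` to `b`. -/
def δ (n : ℕ) (a b : Fin n) : ℕ := if a.val ≤ b.val then b.val - a.val else b.val + n - a.val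

/-- circular distance. -/
def cd (n : ℕ) (a b : Fin n) : ℕ := min (δ n a b) (δ n b a)

/-- add a natural to a vertex. -/
def vAdd (a : Fin n) (t : ℕ) : Fin n := ⟨(a.val + t) % n, Nat.mod_lt _ (a.val.zero_le.trans_lt a.isLt)⟩

lemma δ_lt (a b : Fin n) : δ n a b < n := by
  have := a.isLt; have := b.isLt; unfold δ; split <;> omega

lemma δ_self (a : Fin n) : δ n a a = 0 := by unfold δ; simp

lemma δ_eq_zero {a b : Fin n} (h : δ n a b = 0) : a = b := by
  have := a.isLt; have := b.isLt
  unfold δ at h; apply Fin.ext; split at h <;> omega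

lemma δ_add_δ {a b : Fin n} (h : a ≠ b) : δ n a b + δ n b a = n := by
  have := a.isLt; have := b.isLt
  have hv : a.val ≠ b.val := fun hc => h (Fin.ext hc)
  unfold δ; split <;> (split <;> omega)

lemma cd_comm (a b : Fin n) : cd n a b = cd n b a := by unfold cd; omega

lemma cd_le_δ (a b : Fin n) : cd n a b ≤ δ n a b := min_le_left _ _

lemma cd_le_δ' (a b : Fin n) : cd n a b ≤ δ n b a := min_le_right _ _

lemma cd_self (a : Fin n) : cd n a a = 0 := by unfold cd; simp [δ_self]

lemma cd_eq_zero {a b : Fin n} (h : cd n a b = 0) : a = b := by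
  unfold cd at h
  rcases Nat.min_eq_zero_iff.mp h with h | h
  · exact δ_eq_zero h
  · exact (δ_eq_zero h).symm

lemma vAdd_val_lt {a : Fin n} {t : ℕ} (h : a.val + t < n) : (vAdd a t).val = a.val + t := by
  unfold vAdd; simp [Nat.mod_eq_of_lt h]

lemma vAdd_val_ge {a : Fin n} {t : ℕ} (h1 : n ≤ a.val + t) (h2 : a.val + t < 2 * n) :
    (vAdd a t).val = a.val + t - n := by
  unfold vAdd
  simp only
  rw [show a.val + t = (a.val + t - n) + 1 * n by omega, Nat.add_mul_mod_self_right,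
    Nat.mod_eq_of_lt (by omega)]
  omega

lemma vAdd_vAdd (a : Fin n) (s t : ℕ) : vAdd (vAdd a s) t = vAdd a (s + t) := by
  apply Fin.ext
  show ((a.val + s) % n + t) % n = (a.val + (s + t)) % n
  rw [Nat.mod_add_mod, Nat.add_assoc]

lemma vAdd_zero (a : Fin n) : vAdd a 0 = a := by
  apply Fin.ext; unfold vAdd; simp [Nat.mod_eq_of_lt a.isLt]

lemma vAdd_n (a : Fin n) : vAdd a n = a := by
  apply Fin.ext; unfold vAdd; simp [Nat.add_mod_right, Nat.mod_eq_of_lt a.isLt]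

lemma vAdd_δ (a b : Fin n) : vAdd a (δ n a b) = b := by
  have := a.isLt; have := b.isLt
  apply Fin.ext
  unfold δ; split
  · rw [vAdd_val_lt (by omega)]; omega
  · rw [vAdd_val_ge (by omega) (by omega)]; omega

lemma δ_vAdd (a : Fin n) {t : ℕ} (h : t < n) : δ n a (vAdd a t) = t := by
  have := a.isLt
  by_cases hc : a.val + t < n
  · unfold δ; rw [vAdd_val_lt hc]; split <;> omega
  · unfold δ; rw [vAdd_val_ge (by omega) (by omega)]; split <;> omega

/-- additivity of δ when no wraparound. -/
lemma δ_add_of_lt {a b c : Fin n} (h : δ n a b + δ n b c < n) :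
    δ n a c = δ n a b + δ n b c := by
  have h3 := δ_lt b c
  conv_lhs => rw [show c = vAdd a (δ n a b + δ n b c) by rw [← vAdd_vAdd, vAdd_δ, vAdd_δ]]
  rw [δ_vAdd _ h]

lemma δ_le_add (a b c : Fin n) : δ n a c ≤ δ n a b + δ n b c := by
  by_cases h : δ n a b + δ n b c < n
  · rw [δ_add_of_lt h]
  · exact le_trans (δ_lt a c).le (by omega)

lemma cd_triangle (a b c : Fin n) : cd n a c ≤ cd n a b + cd n b c := by
  have h1 := δ_le_add a b c
  have h2 := δ_le_add c b a
  -- mixed cases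
  have h3 : cd n a c ≤ δ n a b + δ n c b := by
    by_cases hab : δ n a b ≤ δ n c b
    · -- c to a forward: δ c a ≤ δ c b + δ b a? use: a = vAdd c (δ c b - δ a b)?? do: 
      have : δ n c a ≤ δ n c b - δ n a b := by
        have hb : vAdd a (δ n a b) = b := vAdd_δ a b
        have hb2 : vAdd c (δ n c b) = b := vAdd_δ c b
        have : vAdd c (δ n c b - δ n a b + δ n a b) = b := by
          rw [Nat.sub_add_cancel hab]; exact hb2
        rw [← vAdd_vAdd] at this
        have ha : vAdd (vAdd c (δ n c b - δ n a b)) (δ n a b) = vAdd a (δ n a b) := by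
          rw [this, hb]
        -- cancel: vAdd injective in the vertex
        have hinj : vAdd c (δ n c b - δ n a b) = a := by
          have hfun : ∀ x y : Fin n, vAdd x (δ n a b) = vAdd y (δ n a b) → x = y := by
            intro x y hxy
            have : vAdd (vAdd x (δ n a b)) (n - δ n a b) = vAdd (vAdd y (δ n a b)) (n - δ n a b) := by rw [hxy]
            rw [vAdd_vAdd, vAdd_vAdd, Nat.add_sub_cancel' (δ_lt a b).le, vAdd_n, vAdd_n] at this
            exact this
          exact hfun _ _ ha
        calc δ n c a = δ n c (vAdd c (δ n c b - δ n a b)) := by rw [hinj]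
        _ ≤ δ n c b - δ n a b := by
              rw [δ_vAdd c (by have := δ_lt c b; omega)]
      have := cd_le_δ' a c
      omega
    · have : δ n a c ≤ δ n a b - δ n c b := by
        have hb2 : vAdd c (δ n c b) = b := vAdd_δ c b
        have : vAdd a (δ n a b - δ n c b + δ n c b) = b := by
          rw [Nat.sub_add_cancel (by omega)]; exact vAdd_δ a b
        rw [← vAdd_vAdd] at this
        have hinj : vAdd a (δ n a b - δ n c b) = c := by
          have hfun : ∀ x y : Fin n, vAdd x (δ n c b) = vAdd y (δ n c b) → x = y := by
            intro x y hxy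
            have : vAdd (vAdd x (δ n c b)) (n - δ n c b) = vAdd (vAdd y (δ n c b)) (n - δ n c b) := by rw [hxy]
            rw [vAdd_vAdd, vAdd_vAdd, Nat.add_sub_cancel' (δ_lt c b).le, vAdd_n, vAdd_n] at this
            exact this
          exact hfun _ _ (by rw [this, hb2])
        calc δ n a c = δ n a (vAdd a (δ n a b - δ n c b)) := by rw [hinj]
        _ ≤ δ n a b - δ n c b := by rw [δ_vAdd a (by have := δ_lt a b; omega)]
      have := cd_le_δ a c
      omega
  have h4 : cd n a c ≤ δ n b a + δ n b c := by
    by_cases hab : δ n b a ≤ δ n b c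
    · have : δ n a c ≤ δ n b c - δ n b a := by
        have : vAdd (vAdd b (δ n b a)) (δ n b c - δ n b a) = c := by
          rw [vAdd_vAdd, Nat.add_sub_cancel' hab, vAdd_δ]
        rw [vAdd_δ] at this
        calc δ n a c = δ n a (vAdd a (δ n b c - δ n b a)) := by rw [this]
        _ ≤ _ := by rw [δ_vAdd a (by have := δ_lt b c; omega)]
      have := cd_le_δ a c
      omega
    · have : δ n c a ≤ δ n b a - δ n b c := by
        have : vAdd (vAdd b (δ n b c)) (δ n b a - δ n b c) = a := by
          rw [vAdd_vAdd, Nat.add_sub_cancel' (by omega), vAdd_δ]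
        rw [vAdd_δ] at this
        calc δ n c a = δ n c (vAdd c (δ n b a - δ n b c)) := by rw [this]
        _ ≤ _ := by rw [δ_vAdd c (by have := δ_lt b a; omega)]
      have := cd_le_δ' a c
      omega
  have h5 := cd_le_δ a c
  have h6 := cd_le_δ' a c
  simp only [cd, Nat.min_def] at *
  split_ifs at * <;> omega

end CycleAux
-- graph layer, appended later
namespace CycleAux

variable {n : ℕ}

lemma sub_val_eq_δ (a b : Fin n) : (a - b).val = δ n b a := by
  have := a.isLt; have := b.isLt
  rw [Fin.sub_def]
  simp only [δ]
  have h0 : 0 < n := by omega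
  split
  · rw [show n - b.val + a.val = (a.val - b.val) + 1 * n by omega, Nat.add_mul_mod_self_right,
      Nat.mod_eq_of_lt (by omega)]
  · rw [Nat.mod_eq_of_lt (by omega)]
    omega

lemma adj_iff (hn : 3 ≤ n) (a b : Fin n) :
    (SimpleGraph.cycleGraph n).Adj a b ↔ δ n a b = 1 ∨ δ n b a = 1 := by
  rw [SimpleGraph.cycleGraph_adj', sub_val_eq_δ, sub_val_eq_δ]
  tauto

lemma connected (hn : 3 ≤ n) : (SimpleGraph.cycleGraph n).Connected := by
  obtain ⟨m, rfl⟩ : ∃ m, n = m + 1 := ⟨n - 1, by omega⟩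
  exact SimpleGraph.cycleGraph_connected

lemma dist_le_vAdd (hn : 3 ≤ n) (a : Fin n) (t : ℕ) :
    (SimpleGraph.cycleGraph n).dist a (vAdd a t) ≤ t := by
  induction t with
  | zero => rw [vAdd_zero]; simp [SimpleGraph.dist_self]
  | succ t ih =>
    have hadj : (SimpleGraph.cycleGraph n).Adj (vAdd a t) (vAdd a (t + 1)) := by
      rw [adj_iff hn]
      left
      rw [← vAdd_vAdd]
      exact δ_vAdd _ (by omega)
    calc (SimpleGraph.cycleGraph n).dist a (vAdd a (t+1))
        ≤ (SimpleGraph.cycleGraph n).dist a (vAdd a t)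
          + (SimpleGraph.cycleGraph n).dist (vAdd a t) (vAdd a (t+1)) :=
          (connected hn).dist_triangle
      _ ≤ t + 1 := by
          have h1 : (SimpleGraph.cycleGraph n).dist (vAdd a t) (vAdd a (t+1)) ≤ 1 :=
            SimpleGraph.dist_le hadj.toWalk |>.trans (by simp)
          omega

lemma cd_le_walk (hn : 3 ≤ n) {a b : Fin n} (p : (SimpleGraph.cycleGraph n).Walk a b) :
    cd n a b ≤ p.length := by
  induction p with
  | nil => simp [cd_self]
  | @cons u v w h p ih =>
    have h1 : cd n u v ≤ 1 := by
      rw [adj_iff hn] at h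
      rcases h with h | h
      · exact (cd_le_δ u v).trans h.le
      · exact (cd_le_δ' u v).trans h.le
    have := cd_triangle u v w
    simp only [SimpleGraph.Walk.length_cons]
    omega

lemma dist_eq_cd (hn : 3 ≤ n) (a b : Fin n) :
    (SimpleGraph.cycleGraph n).dist a b = cd n a b := by
  apply le_antisymm
  · rcases min_cases (δ n a b) (δ n b a) with ⟨h, _⟩ | ⟨h, _⟩
    · conv_lhs => rw [show b = vAdd a (δ n a b) from (vAdd_δ a b).symm]
      calc _ ≤ δ n a b := dist_le_vAdd hn a _
        _ = cd n a b := h.symm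
    · rw [SimpleGraph.dist_comm]
      conv_lhs => rw [show a = vAdd b (δ n b a) from (vAdd_δ b a).symm]
      calc _ ≤ δ n b a := dist_le_vAdd hn b _
        _ = cd n a b := h.symm
  · obtain ⟨p, hp⟩ := (connected hn).exists_walk_length_eq_dist a b
    rw [← hp]
    exact cd_le_walk hn p

lemma ecc_eq (hn : 3 ≤ n) (v : Fin n) :
    Broadcast.ecc (SimpleGraph.cycleGraph n) v = n / 2 := by
  unfold Broadcast.ecc
  apply le_antisymm
  · apply Finset.sup_le
    intro u _
    rw [dist_eq_cd hn]
    have h1 := δ_lt v u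
    have h2 := δ_lt u v
    by_cases h : v = u
    · subst h; rw [cd_self]; omega
    · have := δ_add_δ h
      unfold cd; omega
  · have hx : (SimpleGraph.cycleGraph n).dist v (vAdd v (n / 2)) = n / 2 := by
      rw [dist_eq_cd hn]
      have h1 : δ n v (vAdd v (n/2)) = n / 2 := δ_vAdd v (by omega)
      by_cases h : v = vAdd v (n/2)
      · exfalso
        have := δ_self v
        rw [← h] at h1
        omega
      · have h2 := δ_add_δ h
        unfold cd; omega
    calc (n:ℕ)/2 = (SimpleGraph.cycleGraph n).dist v (vAdd v (n/2)) := hx.symm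
      _ ≤ _ := Finset.le_sup (Finset.mem_univ _)

lemma ecc_pos (hn : 3 ≤ n) (v : Fin n) : 1 ≤ Broadcast.ecc (SimpleGraph.cycleGraph n) v := by
  rw [ecc_eq hn]; omega

end CycleAux
namespace CycleAux

open Broadcast Finset

section Lower

variable {n : ℕ}

def SS (n : ℕ) (f : Fin n → ℕ) : Finset (Fin n) := Finset.univ.filter (fun v => 1 ≤ f v)

lemma mem_SS {f : Fin n → ℕ} {v : Fin n} : v ∈ SS n f ↔ 1 ≤ f v := by
  simp [SS]

lemma notMem_SS {f : Fin n → ℕ} {v : Fin n} (h : v ∉ SS n f) : f v = 0 := by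
  rw [mem_SS] at h; omega

noncomputable def nd (n : ℕ) (f : Fin n → ℕ) (v : Fin n) : ℕ :=
  sInf {d | 0 < d ∧ vAdd v d ∈ SS n f}

noncomputable def nxt (n : ℕ) (f : Fin n → ℕ) (v : Fin n) : Fin n := vAdd v (nd n f v)

noncomputable def bd (n : ℕ) (f : Fin n → ℕ) (u : Fin n) : ℕ :=
  sInf {d | d < n ∧ vAdd u (n - d) ∈ SS n f}

noncomputable def pv (n : ℕ) (f : Fin n → ℕ) (u : Fin n) : Fin n := vAdd u (n - bd n f u)

variable {f : Fin n → ℕ}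

lemma nd_setNonempty (hn : 3 ≤ n) {v : Fin n} (hv : v ∈ SS n f) :
    {d | 0 < d ∧ vAdd v d ∈ SS n f}.Nonempty :=
  ⟨n, by omega, by rw [vAdd_n]; exact hv⟩

lemma nd_spec (hn : 3 ≤ n) {v : Fin n} (hv : v ∈ SS n f) :
    0 < nd n f v ∧ vAdd v (nd n f v) ∈ SS n f :=
  Nat.sInf_mem (nd_setNonempty hn hv)

lemma nd_le (hn : 3 ≤ n) {v : Fin n} {d : ℕ} (hd : 0 < d) (hmem : vAdd v d ∈ SS n f) :
    nd n f v ≤ d :=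
  Nat.sInf_le ⟨hd, hmem⟩

lemma nd_min {v : Fin n} {d : ℕ} (hd : 0 < d) (hlt : d < nd n f v) :
    vAdd v d ∉ SS n f := fun hmem => (Nat.notMem_of_lt_sInf hlt) ⟨hd, hmem⟩

lemma nd_le_n (hn : 3 ≤ n) {v : Fin n} (hv : v ∈ SS n f) : nd n f v ≤ n :=
  nd_le hn (by omega) (by rw [vAdd_n]; exact hv)

lemma nd_lt_n (hn : 3 ≤ n) (hcard : 2 ≤ (SS n f).card) {v : Fin n} (hv : v ∈ SS n f) :
    nd n f v < n := by
  obtain ⟨w, hw, hne⟩ := Finset.exists_mem_ne (s := SS n f) (by omega) v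
  have h1 : 0 < δ n v w := by
    rcases Nat.eq_zero_or_pos (δ n v w) with h | h
    · exact absurd (δ_eq_zero h).symm hne
    · exact h
  have h2 : nd n f v ≤ δ n v w := nd_le hn h1 (by rw [vAdd_δ]; exact hw)
  exact h2.trans_lt (δ_lt v w)

lemma nxt_mem (hn : 3 ≤ n) {v : Fin n} (hv : v ∈ SS n f) : nxt n f v ∈ SS n f :=
  (nd_spec hn hv).2

lemma δ_nxt (hn : 3 ≤ n) (hcard : 2 ≤ (SS n f).card) {v : Fin n} (hv : v ∈ SS n f) :
    δ n v (nxt n f v) = nd n f v :=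
  δ_vAdd v (nd_lt_n hn hcard hv)

lemma nxt_ne (hn : 3 ≤ n) (hcard : 2 ≤ (SS n f).card) {v : Fin n} (hv : v ∈ SS n f) :
    nxt n f v ≠ v := by
  intro h
  have h1 := δ_nxt hn hcard hv
  rw [h, δ_self] at h1
  have := (nd_spec hn hv).1
  omega

lemma bd_setNonempty (hn : 3 ≤ n) (hS : (SS n f).Nonempty) (u : Fin n) :
    {d | d < n ∧ vAdd u (n - d) ∈ SS n f}.Nonempty := by
  obtain ⟨w, hw⟩ := hS
  refine ⟨δ n w u, δ_lt w u, ?_⟩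
  have hthis : vAdd w (δ n w u) = u := vAdd_δ w u
  have heq : vAdd u (n - δ n w u) = w := by
    calc vAdd u (n - δ n w u) = vAdd (vAdd w (δ n w u)) (n - δ n w u) := by rw [hthis]
      _ = vAdd w n := by rw [vAdd_vAdd, Nat.add_sub_cancel' (δ_lt w u).le]
      _ = w := vAdd_n w
  rw [heq]
  exact hw

lemma bd_spec (hn : 3 ≤ n) (hS : (SS n f).Nonempty) (u : Fin n) :
    bd n f u < n ∧ pv n f u ∈ SS n f :=
  Nat.sInf_mem (bd_setNonempty hn hS u)

lemma bd_min {u : Fin n} {d : ℕ} (hd : d < n) (hlt : d < bd n f u)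
    (hmem : vAdd u (n - d) ∈ SS n f) : False :=
  (Nat.notMem_of_lt_sInf hlt) ⟨hd, hmem⟩

lemma pv_eq (hn : 3 ≤ n) (hS : (SS n f).Nonempty) (u : Fin n) :
    vAdd (pv n f u) (bd n f u) = u := by
  have hlt := (bd_spec hn hS u).1
  unfold pv
  rw [vAdd_vAdd, Nat.sub_add_cancel hlt.le, vAdd_n]

/-- the fiber lemma: points at forward offset `j < nd v` from `v ∈ S` have `pv = v`. -/
lemma pv_vAdd (hn : 3 ≤ n) (hS : (SS n f).Nonempty) {v : Fin n} (hv : v ∈ SS n f)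
    {j : ℕ} (hj : j < nd n f v) : bd n f (vAdd v j) = j ∧ pv n f (vAdd v j) = v := by
  have hjn : j < n := hj.trans_le (nd_le_n hn hv)
  have hmem : j ∈ {d | d < n ∧ vAdd (vAdd v j) (n - d) ∈ SS n f} := by
    refine ⟨hjn, ?_⟩
    rw [vAdd_vAdd, Nat.add_sub_cancel' hjn.le, vAdd_n]
    exact hv
  have h1 : bd n f (vAdd v j) ≤ j := Nat.sInf_le hmem
  have h2 : ¬ bd n f (vAdd v j) < j := by
    intro hlt
    have hmem2 : pv n f (vAdd v j) ∈ SS n f := (bd_spec hn hS _).2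
    have he : pv n f (vAdd v j) = vAdd v (j - bd n f (vAdd v j)) := by
      unfold pv
      rw [vAdd_vAdd, show j + (n - bd n f (vAdd v j)) = (j - bd n f (vAdd v j)) + n by omega,
        ← vAdd_vAdd, vAdd_n]
    rw [he] at hmem2
    exact nd_min (by omega) (by omega) hmem2
  have hbd : bd n f (vAdd v j) = j := by omega
  refine ⟨hbd, ?_⟩
  unfold pv
  rw [hbd, vAdd_vAdd, Nat.add_sub_cancel' hjn.le, vAdd_n]

lemma bd_lt_nd (hn : 3 ≤ n) (hS : (SS n f).Nonempty) {u : Fin n} {v : Fin n}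
    (hv : v ∈ SS n f) (hpv : pv n f u = v) : bd n f u < nd n f v ∧ u = vAdd v (bd n f u) := by
  have h1 : u = vAdd v (bd n f u) := by rw [← hpv]; exact (pv_eq hn hS u).symm
  refine ⟨?_, h1⟩
  by_contra hge
  push_neg at hge
  have hnd := nd_spec hn hv
  have hnd2 := nd_le_n hn hv
  have hbd := (bd_spec hn hS u).1
  -- d := bd u - nd v < bd u contradicts minimality
  obtain ⟨B, hB⟩ : ∃ B, bd n f u = B := ⟨_, rfl⟩
  rw [hB] at h1 hbd hge
  have he : vAdd u (n - (B - nd n f v)) = vAdd v (nd n f v) := by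
    conv_lhs => rw [h1]
    rw [vAdd_vAdd, show B + (n - (B - nd n f v)) = nd n f v + n by omega,
      ← vAdd_vAdd, vAdd_n]
  exact bd_min (n := n) (f := f) (u := u) (by omega) (by rw [hB]; omega) (he ▸ hnd.2)

lemma sum_nd (hn : 3 ≤ n) (hS : (SS n f).Nonempty) :
    ∑ v ∈ SS n f, nd n f v = n := by
  have hmap : ∀ u : Fin n, u ∈ Finset.univ → pv n f u ∈ SS n f :=
    fun u _ => (bd_spec hn hS u).2
  have hcard := Finset.card_eq_sum_card_fiberwise hmap
  rw [Finset.card_univ, Fintype.card_fin] at hcard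
  conv_rhs => rw [hcard]
  apply Finset.sum_congr rfl
  intro v hv
  -- fiber of v equals image of range (nd v)
  have hfib : Finset.univ.filter (fun u => pv n f u = v)
      = (Finset.range (nd n f v)).image (fun j => vAdd v j) := by
    apply Finset.ext
    intro u
    simp only [Finset.mem_filter, Finset.mem_univ, true_and, Finset.mem_image, Finset.mem_range]
    constructor
    · intro hpv
      obtain ⟨hlt, he⟩ := bd_lt_nd hn hS hv hpv
      exact ⟨bd n f u, hlt, he.symm⟩
    · rintro ⟨j, hj, rfl⟩
      exact (pv_vAdd hn hS hv hj).2
  rw [hfib, Finset.card_image_of_injOn, Finset.card_range]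
  intro j₁ hj₁ j₂ hj₂ he
  simp only [Finset.coe_range, Set.mem_Iio] at hj₁ hj₂
  have hle := nd_le_n hn hv
  have e1 : δ n v (vAdd v j₁) = j₁ := δ_vAdd v (by omega)
  have e2 : δ n v (vAdd v j₂) = j₂ := δ_vAdd v (by omega)
  have he' : vAdd v j₁ = vAdd v j₂ := he
  rw [← e1, ← e2, he']

noncomputable def psv (n : ℕ) (f : Fin n → ℕ) (v : Fin n) : Fin n := pv n f (vAdd v (n - 1))

lemma psv_nxt (hn : 3 ≤ n) (hS : (SS n f).Nonempty) {v : Fin n} (hv : v ∈ SS n f) :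
    psv n f (nxt n f v) = v := by
  unfold psv nxt
  have h1 := (nd_spec hn hv).1
  have h2 := nd_le_n hn hv
  have he : vAdd (vAdd v (nd n f v)) (n - 1) = vAdd v (nd n f v - 1) := by
    rw [vAdd_vAdd, show nd n f v + (n - 1) = (nd n f v - 1) + n by omega, ← vAdd_vAdd, vAdd_n]
  rw [he]
  exact (pv_vAdd hn hS hv (by omega)).2

lemma psv_mem (hn : 3 ≤ n) (hS : (SS n f).Nonempty) (v : Fin n) : psv n f v ∈ SS n f :=
  (bd_spec hn hS _).2

lemma nxt_psv (hn : 3 ≤ n) (hS : (SS n f).Nonempty) {v : Fin n} (hv : v ∈ SS n f) :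
    nxt n f (psv n f v) = v := by
  unfold psv
  set u := vAdd v (n - 1) with hu
  set p := pv n f u with hp
  have hpS : p ∈ SS n f := (bd_spec hn hS u).2
  have hbd := (bd_spec hn hS u).1
  have hue : vAdd p (bd n f u) = u := pv_eq hn hS u
  have hv' : vAdd p (bd n f u + 1) = v := by
    rw [← vAdd_vAdd, hue, hu, vAdd_vAdd, show n - 1 + 1 = n by omega, vAdd_n]
  have hle : nd n f p ≤ bd n f u + 1 := nd_le hn (by omega) (by rw [hv']; exact hv)
  have hgt : ¬ nd n f p ≤ bd n f u := by
    intro hle2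
    have h1 := (nd_spec hn hpS).1
    obtain ⟨B, hB⟩ : ∃ B, bd n f u = B := ⟨_, rfl⟩
    rw [hB] at hue hbd hle2
    have he : vAdd u (n - (B - nd n f p)) = vAdd p (nd n f p) := by
      conv_lhs => rw [← hue]
      rw [vAdd_vAdd, show B + (n - (B - nd n f p)) = nd n f p + n by omega,
        ← vAdd_vAdd, vAdd_n]
    exact bd_min (n := n) (f := f) (u := u) (by omega) (by omega) (he ▸ (nd_spec hn hpS).2)
  have : nd n f p = bd n f u + 1 := by omega
  unfold nxt
  rw [this, hv']

end Lower

end CycleAux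
namespace CycleAux

open Broadcast Finset

section Lower2

variable {n : ℕ} {f : Fin n → ℕ}

lemma mem_hears {g : Fin n → ℕ} {u x : Fin n} :
    x ∈ hears (SimpleGraph.cycleGraph n) g u ↔ 1 ≤ g x ∧ (SimpleGraph.cycleGraph n).dist u x ≤ g x :=
  Iff.rfl

/-- L11 : packing forces gaps at least f v + f (nxt v) + 1 -/
lemma gap_lower (hn : 3 ≤ n) (hpack : IsPacking (SimpleGraph.cycleGraph n) f)
    (hcard : 2 ≤ (SS n f).card) {v : Fin n} (hv : v ∈ SS n f) :
    f v + f (nxt n f v) + 1 ≤ nd n f v := by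
  by_contra hcon
  push_neg at hcon
  set w := nxt n f v with hw
  have hwmem : w ∈ SS n f := nxt_mem hn hv
  have hndlt : nd n f v < n := nd_lt_n hn hcard hv
  have hndpos : 0 < nd n f v := (nd_spec hn hv).1
  set m := min (f v) (nd n f v) with hm
  set u := vAdd v m with hu
  have hδvu : δ n v u = m := δ_vAdd v (by omega)
  have huw : vAdd u (nd n f v - m) = w := by
    rw [hu, vAdd_vAdd, show m + (nd n f v - m) = nd n f v by omega, hw]
    rfl
  have hδuw : δ n u w = nd n f v - m := by rw [← huw]; exact δ_vAdd u (by omega)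
  have h1 : (SimpleGraph.cycleGraph n).dist u v ≤ f v := by
    rw [dist_eq_cd hn]
    exact le_trans (cd_le_δ' u v) (by omega)
  have h2 : (SimpleGraph.cycleGraph n).dist u w ≤ f w := by
    rw [dist_eq_cd hn]
    exact le_trans (cd_le_δ u w) (by omega)
  have hvh : v ∈ hears (SimpleGraph.cycleGraph n) f u := ⟨mem_SS.mp hv, h1⟩
  have hwh : w ∈ hears (SimpleGraph.cycleGraph n) f u := ⟨mem_SS.mp hwmem, h2⟩
  exact (nxt_ne hn hcard hv) (hpack.2 u hwh hvh)

/-- L12 : chain lemma -/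
lemma delta_lower (hn : 3 ≤ n) (hpack : IsPacking (SimpleGraph.cycleGraph n) f)
    (hcard : 2 ≤ (SS n f).card) :
    ∀ d, ∀ p q : Fin n, p ∈ SS n f → q ∈ SS n f → p ≠ q → δ n p q = d →
      (f p + f q + 1 ≤ d ∧ (q ≠ nxt n f p → f p + f q + 4 ≤ d)) := by
  intro d
  induction d using Nat.strong_induction_on with
  | _ d ih =>
    intro p q hp hq hne hd
    have hd0 : 0 < d := by
      rcases Nat.eq_zero_or_pos d with h | h
      · exact absurd (δ_eq_zero (hd.trans h)) hne
      · exact h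
    have hdn : d < n := hd ▸ δ_lt p q
    have hq' : vAdd p d = q := by rw [← hd]; exact vAdd_δ p q
    have hndle : nd n f p ≤ d := nd_le hn hd0 (hq' ▸ hq)
    rcases eq_or_lt_of_le hndle with heq | hlt
    · have hqnxt : q = nxt n f p := by rw [← hq', nxt, heq]
      have := gap_lower hn hpack hcard hp
      rw [← hqnxt] at this
      exact ⟨by omega, fun hne' => absurd hqnxt hne'⟩
    · set p' := nxt n f p with hp'def
      have hp' : p' ∈ SS n f := nxt_mem hn hp
      have hndpos : 0 < nd n f p := (nd_spec hn hp).1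
      have hq'' : vAdd p' (d - nd n f p) = q := by
        rw [hp'def, nxt, vAdd_vAdd, show nd n f p + (d - nd n f p) = d by omega, hq']
      have hδ : δ n p' q = d - nd n f p := by rw [← hq'']; exact δ_vAdd p' (by omega)
      have hne' : p' ≠ q := by
        intro h
        rw [h, δ_self] at hδ
        omega
      have hih := ih (d - nd n f p) (by omega) p' q hp' hq hne' hδ
      have hgap := gap_lower hn hpack hcard hp
      have hfp' : 1 ≤ f p' := mem_SS.mp hp'
      rw [← hp'def] at hgap
      exact ⟨by omega, fun _ => by omega⟩

/-- L13 -/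
lemma pair_le_sum (hn : 3 ≤ n) {v w : Fin n} (hv : v ∈ SS n f) (hw : w ∈ SS n f)
    (hne : v ≠ w) : nd n f v + nd n f w ≤ n := by
  have hS : (SS n f).Nonempty := ⟨v, hv⟩
  have hsub : ({v, w} : Finset (Fin n)) ⊆ SS n f := by
    intro x hx
    rcases Finset.mem_insert.mp hx with h | h
    · exact h ▸ hv
    · exact (Finset.mem_singleton.mp h) ▸ hw
  calc nd n f v + nd n f w = ∑ x ∈ ({v, w} : Finset (Fin n)), nd n f x :=
        (Finset.sum_pair hne).symm
    _ ≤ ∑ x ∈ SS n f, nd n f x := Finset.sum_le_sum_of_subset hsub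
    _ = n := sum_nd hn hS

/-- claim for G2 : the candidate new broadcast vertex is far from S -/
lemma far_from_S (hn : 3 ≤ n) (hpack : IsPacking (SimpleGraph.cycleGraph n) f)
    (hcard : 2 ≤ (SS n f).card) {v : Fin n} (hv : v ∈ SS n f)
    (hbig : f v + f (nxt n f v) + 4 ≤ nd n f v) :
    ∀ x ∈ SS n f, f x + 2 ≤ cd n (vAdd v (f v + 2)) x := by
  intro x hx
  have hS : (SS n f).Nonempty := ⟨v, hv⟩
  set w := nxt n f v with hwdef
  have hwmem : w ∈ SS n f := nxt_mem hn hv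
  have hndlt : nd n f v < n := nd_lt_n hn hcard hv
  set a := f v + 2 with ha
  set u := vAdd v a with hu
  have hδvu : δ n v u = a := δ_vAdd v (by omega)
  have hvu : v ≠ u := by
    intro h
    rw [← h, δ_self] at hδvu
    omega
  have hδuv : δ n u v = n - a := by
    have := δ_add_δ hvu
    omega
  have huw : vAdd u (nd n f v - a) = w := by
    rw [hu, vAdd_vAdd, show a + (nd n f v - a) = nd n f v by omega, hwdef, nxt]
  have hδuw : δ n u w = nd n f v - a := by rw [← huw]; exact δ_vAdd u (by omega)
  have huwne : u ≠ w := by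
    intro h
    rw [h, δ_self] at hδuw
    omega
  have hδwu : δ n w u = n - (nd n f v - a) := by
    have := δ_add_δ huwne
    omega
  -- basic sums
  have hpair : nd n f v + nd n f (psv n f v) ≤ n := by
    have hps : psv n f v ∈ SS n f := psv_mem hn hS v
    have hne : psv n f v ≠ v := by
      intro h
      have := nxt_psv hn hS hv
      rw [h] at this
      exact (nxt_ne hn hcard hv) this
    have := pair_le_sum hn hps hv hne
    omega
  have hpsv_gap : f v + 1 ≤ nd n f (psv n f v) := by
    have hps : psv n f v ∈ SS n f := psv_mem hn hS v
    have := gap_lower hn hpack hcard hps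
    rw [nxt_psv hn hS hv] at this
    omega
  have hfw : 1 ≤ f w := mem_SS.mp hwmem
  have hfv : 1 ≤ f v := mem_SS.mp hv
  by_cases hxv : x = v
  · rw [hxv]
    have hrfl : cd n u v = min (δ n u v) (δ n v u) := rfl
    rw [hrfl, hδuv, hδvu]
    omega
  by_cases hxw : x = w
  · rw [hxw]
    have hpairw : nd n f v + nd n f w ≤ n := by
      refine pair_le_sum hn hv hwmem ?_
      intro h
      apply nxt_ne hn hcard hv
      rw [← hwdef]
      exact h.symm
    have hwgap : f w + 1 ≤ nd n f w := by
      have := gap_lower hn hpack hcard hwmem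
      omega
    have hrfl : cd n u w = min (δ n u w) (δ n w u) := rfl
    rw [hrfl, hδuw, hδwu]
    omega
  · -- general x
    have hδvx_ge : nd n f v < δ n v x := by
      have hxvne : x ≠ v := hxv
      have h1 : 0 < δ n v x := by
        rcases Nat.eq_zero_or_pos (δ n v x) with h | h
        · exact absurd (δ_eq_zero h).symm hxv
        · exact h
      have h2 : nd n f v ≤ δ n v x := nd_le hn h1 (by rw [vAdd_δ]; exact hx)
      rcases eq_or_lt_of_le h2 with h | h
      · exfalso
        apply hxw
        rw [← vAdd_δ v x, ← h, hwdef, nxt]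
      · exact h
    have hδvx_lt : δ n v x < n := δ_lt v x
    have hδwx : δ n w x = δ n v x - nd n f v := by
      have : vAdd w (δ n v x - nd n f v) = x := by
        rw [hwdef, nxt, vAdd_vAdd, show nd n f v + (δ n v x - nd n f v) = δ n v x by omega,
          vAdd_δ]
      conv_lhs => rw [← this]
      exact δ_vAdd w (show δ n v x - nd n f v < n by omega)
    have hδux : δ n u x = δ n v x - a := by
      have : vAdd u (δ n v x - a) = x := by
        rw [hu, vAdd_vAdd, show a + (δ n v x - a) = δ n v x by omega, vAdd_δ]
      conv_lhs => rw [← this]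
      exact δ_vAdd u (show δ n v x - a < n by omega)
    have hδxv : δ n x v = n - δ n v x := by
      have := δ_add_δ (show v ≠ x from fun h => hxv h.symm)
      omega
    have hδxu : δ n x u = n - δ n v x + a := by
      have : vAdd x (n - δ n v x + a) = u := by
        rw [show n - δ n v x + a = δ n x v + a by omega, ← vAdd_vAdd, vAdd_δ, hu]
      conv_lhs => rw [← this]
      exact δ_vAdd x (show n - δ n v x + a < n by omega)
    have hLwx : f w + f x + 1 ≤ δ n w x :=
      (delta_lower hn hpack hcard _ w x hwmem hx (fun h => hxw h.symm) rfl).1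
    have hLxv : f x + f v + 1 ≤ δ n x v :=
      (delta_lower hn hpack hcard _ x v hx hv (fun h => hxv h) rfl).1
    have hrfl : cd n u x = min (δ n u x) (δ n x u) := rfl
    rw [hrfl, hδux, hδxu]
    omega

end Lower2

end CycleAux
namespace CycleAux

open Broadcast Finset

section Lower3

variable {n : ℕ} {f : Fin n → ℕ}

/-- G2 : gaps are at most f v + f (nxt v) + 3 -/
lemma gap_upper (hn : 3 ≤ n) (hmax : IsMaximalPacking (SimpleGraph.cycleGraph n) f)
    (hcard : 2 ≤ (SS n f).card) {v : Fin n} (hv : v ∈ SS n f) :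
    nd n f v ≤ f v + f (nxt n f v) + 3 := by
  by_contra hcon
  push_neg at hcon
  have hpack := hmax.1
  have hbig : f v + f (nxt n f v) + 4 ≤ nd n f v := hcon
  have hfar := far_from_S hn hpack hcard hv hbig
  set u := vAdd v (f v + 2) with hu
  have huS : u ∉ SS n f := by
    intro hmem
    exact nd_min (n := n) (f := f) (v := v) (by omega) (by omega) hmem
  have hfu : f u = 0 := notMem_SS huS
  set g : Fin n → ℕ := fun y => if y = u then 1 else f y with hg
  have hgpack : IsPacking (SimpleGraph.cycleGraph n) g := by
    constructor
    · intro y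
      by_cases hy : y = u
      · simp only [hg, hy, if_pos rfl]
        exact ecc_pos hn u
      · simp only [hg, if_neg hy]
        exact hmax.1.1 y
    · intro y x₁ h₁ x₂ h₂
      obtain ⟨h₁a, h₁b⟩ := h₁
      obtain ⟨h₂a, h₂b⟩ := h₂
      by_cases e₁ : x₁ = u <;> by_cases e₂ : x₂ = u
      · rw [e₁, e₂]
      · exfalso
        have h₂a' : 1 ≤ f x₂ := by simpa [hg, e₂] using h₂a
        have h₂b' : (SimpleGraph.cycleGraph n).dist y x₂ ≤ f x₂ := by
          have := h₂b
          rw [hg] at this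
          simpa [e₂] using this
        have h₁b' : (SimpleGraph.cycleGraph n).dist y u ≤ 1 := by
          have := h₁b
          rw [e₁] at this
          simpa [hg] using this
        have hx₂S : x₂ ∈ SS n f := mem_SS.mpr h₂a'
        have htri := cd_triangle u y x₂
        have hcd1 : cd n u y ≤ 1 := by rw [cd_comm, ← dist_eq_cd hn]; exact h₁b'
        have hcd2 : cd n y x₂ ≤ f x₂ := by rw [← dist_eq_cd hn]; exact h₂b'
        have := hfar x₂ hx₂S
        omega
      · exfalso
        have h₁a' : 1 ≤ f x₁ := by simpa [hg, e₁] using h₁a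
        have h₁b' : (SimpleGraph.cycleGraph n).dist y x₁ ≤ f x₁ := by
          have := h₁b
          rw [hg] at this
          simpa [e₁] using this
        have h₂b' : (SimpleGraph.cycleGraph n).dist y u ≤ 1 := by
          have := h₂b
          rw [e₂] at this
          simpa [hg] using this
        have hx₁S : x₁ ∈ SS n f := mem_SS.mpr h₁a'
        have htri := cd_triangle u y x₁
        have hcd1 : cd n u y ≤ 1 := by rw [cd_comm, ← dist_eq_cd hn]; exact h₂b'
        have hcd2 : cd n y x₁ ≤ f x₁ := by rw [← dist_eq_cd hn]; exact h₁b'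
        have := hfar x₁ hx₁S
        omega
      · rw [hg] at h₁a h₁b h₂a h₂b
        simp only [if_neg e₁] at h₁a h₁b
        simp only [if_neg e₂] at h₂a h₂b
        exact hpack.2 y ⟨h₁a, h₁b⟩ ⟨h₂a, h₂b⟩
  have hge : ∀ y, f y ≤ g y := by
    intro y
    rw [hg]
    by_cases hy : y = u
    · simp only [if_pos hy]
      rw [hy, hfu]
      omega
    · simp only [if_neg hy]
      exact le_refl _
  have hgf := hmax.2 g hgpack hge
  have h1 : (1 : ℕ) = f u := by simpa [hg] using congrFun hgf u
  omega

/-- G3 : every broadcast vertex is adjacent to a tight gap -/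
lemma tight (hn : 3 ≤ n) (hmax : IsMaximalPacking (SimpleGraph.cycleGraph n) f)
    (hcard : 2 ≤ (SS n f).card) {v : Fin n} (hv : v ∈ SS n f) :
    nd n f v = f v + f (nxt n f v) + 1 ∨
      nd n f (psv n f v) = f (psv n f v) + f v + 1 := by
  have hpack := hmax.1
  have hS : (SS n f).Nonempty := ⟨v, hv⟩
  have hps : psv n f v ∈ SS n f := psv_mem hn hS v
  have hpsne : psv n f v ≠ v := by
    intro h
    have := nxt_psv hn hS hv
    rw [h] at this
    exact (nxt_ne hn hcard hv) this
  have hpair : nd n f (psv n f v) + nd n f v ≤ n := pair_le_sum hn hps hv hpsne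
  have hgap1 : f v + f (nxt n f v) + 1 ≤ nd n f v := gap_lower hn hpack hcard hv
  have hgap2 : f (psv n f v) + f v + 1 ≤ nd n f (psv n f v) := by
    have := gap_lower hn hpack hcard hps
    rw [nxt_psv hn hS hv] at this
    exact this
  have hfv : 1 ≤ f v := mem_SS.mp hv
  have hfw : 1 ≤ f (nxt n f v) := mem_SS.mp (nxt_mem hn hv)
  have hfp : 1 ≤ f (psv n f v) := mem_SS.mp hps
  have hecc : 2 * f v + 4 ≤ n := by omega
  -- build g = f + 1_v
  set g : Fin n → ℕ := fun y => if y = v then f v + 1 else f y with hg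
  have hgb : IsBroadcast (SimpleGraph.cycleGraph n) g := by
    intro y
    by_cases hy : y = v
    · simp only [hg, if_pos hy]
      rw [ecc_eq hn]
      omega
    · simp only [hg, if_neg hy]
      exact hmax.1.1 y
  have hgnp : ¬ IsPacking (SimpleGraph.cycleGraph n) g := by
    intro hgp
    have hgf := hmax.2 g hgp (fun y => by
      rw [hg]; by_cases hy : y = v
      · simp only [if_pos hy]; rw [hy]; omega
      · simp only [if_neg hy]; exact le_refl _)
    have h1 : f v + 1 = f v := by simpa [hg] using congrFun hgf v
    omega
  have hex : ∃ y x₁ x₂, x₁ ∈ hears (SimpleGraph.cycleGraph n) g y ∧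
      x₂ ∈ hears (SimpleGraph.cycleGraph n) g y ∧ x₁ ≠ x₂ := by
    by_contra hno
    push_neg at hno
    exact hgnp ⟨hgb, fun y a ha b hb => hno y a b ha hb⟩
  obtain ⟨y, x₁, x₂, h₁, h₂, hne⟩ := hex
  -- extract the non-v witness
  have key : ∃ x, x ≠ v ∧ x ∈ SS n f ∧
      (SimpleGraph.cycleGraph n).dist y x ≤ f x ∧
      (SimpleGraph.cycleGraph n).dist y v ≤ f v + 1 := by
    by_cases e₁ : x₁ = v <;> by_cases e₂ : x₂ = v
    · exact absurd (e₁.trans e₂.symm) hne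
    · refine ⟨x₂, e₂, ?_, ?_, ?_⟩
      · obtain ⟨ha, hb⟩ := h₂
        rw [hg] at ha
        simp only [if_neg e₂] at ha
        exact mem_SS.mpr ha
      · obtain ⟨ha, hb⟩ := h₂
        rw [hg] at hb
        simp only [if_neg e₂] at hb
        exact hb
      · obtain ⟨ha, hb⟩ := h₁
        rw [hg] at hb
        rw [e₁] at hb
        simp only [if_pos rfl] at hb
        exact hb
    · refine ⟨x₁, e₁, ?_, ?_, ?_⟩
      · obtain ⟨ha, hb⟩ := h₁
        rw [hg] at ha
        simp only [if_neg e₁] at ha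
        exact mem_SS.mpr ha
      · obtain ⟨ha, hb⟩ := h₁
        rw [hg] at hb
        simp only [if_neg e₁] at hb
        exact hb
      · obtain ⟨ha, hb⟩ := h₂
        rw [hg] at hb
        rw [e₂] at hb
        simp only [if_pos rfl] at hb
        exact hb
    · -- both differ from v : they hear y under f, contradicting packing
      exfalso
      obtain ⟨h₁a, h₁b⟩ := h₁
      obtain ⟨h₂a, h₂b⟩ := h₂
      rw [hg] at h₁a h₁b h₂a h₂b
      simp only [if_neg e₁] at h₁a h₁b
      simp only [if_neg e₂] at h₂a h₂b
      exact hne (hpack.2 y ⟨h₁a, h₁b⟩ ⟨h₂a, h₂b⟩)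
  obtain ⟨x, hxv, hxS, hdx, hdv⟩ := key
  have htri : cd n v x ≤ (f v + 1) + f x := by
    have := cd_triangle v y x
    have h1 : cd n v y ≤ f v + 1 := by
      rw [← dist_eq_cd hn, SimpleGraph.dist_comm]
      exact hdv
    have h2 : cd n y x ≤ f x := by
      rw [← dist_eq_cd hn]
      exact hdx
    omega
  have hmin : δ n v x ≤ f v + f x + 1 ∨ δ n x v ≤ f v + f x + 1 := by
    have : cd n v x = min (δ n v x) (δ n x v) := rfl
    omega
  rcases hmin with hcase | hcase
  · -- x must be nxt v
    have hxnxt : x = nxt n f v := by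
      by_contra hxn
      have := (delta_lower hn hpack hcard _ v x hv hxS (fun h => hxv h.symm) rfl).2 hxn
      omega
    left
    have hδ : δ n v x = nd n f v := by
      rw [hxnxt]
      exact δ_nxt hn hcard hv
    rw [hxnxt] at hcase hδ
    omega
  · -- v must be nxt x
    have hvnxt : v = nxt n f x := by
      by_contra hvn
      have := (delta_lower hn hpack hcard _ x v hxS hv hxv rfl).2 hvn
      omega
    have hxpsv : psv n f v = x := by
      conv_lhs => rw [hvnxt]
      exact psv_nxt hn hS hxS
    right
    have hδ : δ n x v = nd n f x := by
      conv_lhs => rw [hvnxt]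
      exact δ_nxt hn hcard hxS
    have hgapx : f x + f v + 1 ≤ nd n f x := by
      have := gap_lower hn hpack hcard hxS
      rw [← hvnxt] at this
      exact this
    rw [hxpsv]
    omega

end Lower3

end CycleAux
namespace CycleAux

open Broadcast Finset

section Lower4

variable {n : ℕ} {f : Fin n → ℕ}

noncomputable def TT (n : ℕ) (f : Fin n → ℕ) : Finset (Fin n) :=
  (SS n f).filter (fun v => nd n f v = f v + f (nxt n f v) + 1)

lemma card_le_2T (hn : 3 ≤ n) (hmax : IsMaximalPacking (SimpleGraph.cycleGraph n) f)
    (hcard : 2 ≤ (SS n f).card) : (SS n f).card ≤ 2 * (TT n f).card := by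
  classical
  have hS : (SS n f).Nonempty := Finset.card_pos.mp (by omega)
  set φ : Fin n → Fin n := fun v =>
    if nd n f v = f v + f (nxt n f v) + 1 then v else psv n f v with hφ
  have hmaps : ∀ v ∈ SS n f, φ v ∈ TT n f := by
    intro v hv
    rw [hφ]
    by_cases hc : nd n f v = f v + f (nxt n f v) + 1
    · simp only [if_pos hc]
      exact Finset.mem_filter.mpr ⟨hv, hc⟩
    · simp only [if_neg hc]
      rcases tight hn hmax hcard hv with h | h
      · exact absurd h hc
      · refine Finset.mem_filter.mpr ⟨psv_mem hn hS v, ?_⟩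
        rw [nxt_psv hn hS hv]
        exact h
  have hfib := Finset.card_eq_sum_card_fiberwise hmaps
  rw [hfib]
  have hbound : ∀ t ∈ TT n f, ((SS n f).filter (fun v => φ v = t)).card ≤ 2 := by
    intro t ht
    have hsub : (SS n f).filter (fun v => φ v = t) ⊆ {t, nxt n f t} := by
      intro v hvmem
      obtain ⟨hvS, hvφ⟩ := Finset.mem_filter.mp hvmem
      rw [hφ] at hvφ
      by_cases hc : nd n f v = f v + f (nxt n f v) + 1
      · simp only [if_pos hc] at hvφ
        rw [← hvφ]
        exact Finset.mem_insert_self _ _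
      · simp only [if_neg hc] at hvφ
        have hnv : v = nxt n f t := by
          rw [← hvφ]
          exact (nxt_psv hn hS hvS).symm
        rw [hnv]
        exact Finset.mem_insert.mpr (Or.inr (Finset.mem_singleton_self _))
    calc _ ≤ ({t, nxt n f t} : Finset (Fin n)).card := Finset.card_le_card hsub
      _ ≤ 2 := by
        apply le_trans (Finset.card_insert_le _ _)
        simp
  calc ∑ t ∈ TT n f, ((SS n f).filter (fun v => φ v = t)).card
      ≤ ∑ _t ∈ TT n f, 2 := Finset.sum_le_sum hbound
    _ = 2 * (TT n f).card := by
        rw [Finset.sum_const, smul_eq_mul]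
        ring

lemma cost_eq_sum_SS : cost f = ∑ v ∈ SS n f, f v := by
  classical
  unfold cost
  rw [← Finset.sum_filter_add_sum_filter_not Finset.univ (fun v => 1 ≤ f v) f]
  have h2 : ∑ v ∈ Finset.univ.filter (fun v => ¬ 1 ≤ f v), f v = 0 := by
    apply Finset.sum_eq_zero
    intro v hv
    have := (Finset.mem_filter.mp hv).2
    omega
  rw [h2]
  rfl

lemma sum_f_nxt (hn : 3 ≤ n) (hcard : 2 ≤ (SS n f).card) :
    ∑ v ∈ SS n f, f (nxt n f v) = ∑ v ∈ SS n f, f v := by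
  have hS : (SS n f).Nonempty := Finset.card_pos.mp (by omega)
  exact Finset.sum_nbij' (i := fun v => nxt n f v) (j := fun v => psv n f v)
    (fun v hv => nxt_mem hn hv)
    (fun v hv => psv_mem hn hS v)
    (fun v hv => psv_nxt hn hS hv)
    (fun v hv => nxt_psv hn hS hv)
    (fun v hv => rfl)

lemma total_bound (hn : 3 ≤ n) (hmax : IsMaximalPacking (SimpleGraph.cycleGraph n) f)
    (hcard : 2 ≤ (SS n f).card) :
    n + 2 * (TT n f).card ≤ 2 * cost f + 3 * (SS n f).card := by
  classical
  have hS : (SS n f).Nonempty := Finset.card_pos.mp (by omega)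
  have hTTdef : TT n f = (SS n f).filter (fun v => nd n f v = f v + f (nxt n f v) + 1) := rfl
  have hsplit := Finset.sum_filter_add_sum_filter_not (SS n f)
    (fun v => nd n f v = f v + f (nxt n f v) + 1) (nd n f)
  have hsum := sum_nd hn hS
  have hA : ∑ v ∈ TT n f, nd n f v
      = (∑ v ∈ TT n f, (f v + f (nxt n f v))) + (TT n f).card := by
    have h0 : ∑ v ∈ TT n f, nd n f v = ∑ v ∈ TT n f, (f v + f (nxt n f v) + 1) := by
      apply Finset.sum_congr rfl
      intro v hv
      rw [hTTdef] at hv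
      exact (Finset.mem_filter.mp hv).2
    rw [h0, Finset.sum_add_distrib, Finset.sum_const, smul_eq_mul, mul_one]
  have hB : ∑ v ∈ (SS n f).filter (fun v => ¬ nd n f v = f v + f (nxt n f v) + 1), nd n f v
      ≤ (∑ v ∈ (SS n f).filter (fun v => ¬ nd n f v = f v + f (nxt n f v) + 1),
          (f v + f (nxt n f v)))
        + 3 * ((SS n f).filter (fun v => ¬ nd n f v = f v + f (nxt n f v) + 1)).card := by
    calc ∑ v ∈ (SS n f).filter (fun v => ¬ nd n f v = f v + f (nxt n f v) + 1), nd n f v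
        ≤ ∑ v ∈ (SS n f).filter (fun v => ¬ nd n f v = f v + f (nxt n f v) + 1),
            (f v + f (nxt n f v) + 3) := by
          apply Finset.sum_le_sum
          intro v hv
          exact gap_upper hn hmax hcard (Finset.mem_filter.mp hv).1
      _ = _ := by
          rw [Finset.sum_add_distrib, Finset.sum_const, smul_eq_mul]
          ring
  have hcards : (TT n f).card
      + ((SS n f).filter (fun v => ¬ nd n f v = f v + f (nxt n f v) + 1)).card
      = (SS n f).card := by
    rw [hTTdef]
    exact Finset.card_filter_add_card_filter_not _
  have hC : (∑ v ∈ TT n f, (f v + f (nxt n f v)))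
      + (∑ v ∈ (SS n f).filter (fun v => ¬ nd n f v = f v + f (nxt n f v) + 1),
          (f v + f (nxt n f v)))
      = 2 * cost f := by
    have h1 := Finset.sum_filter_add_sum_filter_not (SS n f)
      (fun v => nd n f v = f v + f (nxt n f v) + 1) (fun v => f v + f (nxt n f v))
    rw [hTTdef, h1, Finset.sum_add_distrib, sum_f_nxt hn hcard, cost_eq_sum_SS]
    ring
  have hTT : ∑ v ∈ TT n f, nd n f v
      + ∑ v ∈ (SS n f).filter (fun v => ¬ nd n f v = f v + f (nxt n f v) + 1), nd n f v
      = n := by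
    rw [hTTdef, hsplit]
    exact hsum
  omega

lemma card_le_cost : (SS n f).card ≤ cost f := by
  rw [cost_eq_sum_SS]
  calc (SS n f).card = ∑ _v ∈ SS n f, 1 := by
        rw [Finset.sum_const, smul_eq_mul, mul_one]
    _ ≤ ∑ v ∈ SS n f, f v := Finset.sum_le_sum (fun v hv => mem_SS.mp hv)

/-- The lower bound. -/
lemma cost_lower (hn : 3 ≤ n) (hmax : IsMaximalPacking (SimpleGraph.cycleGraph n) f) :
    2 * (n / 8) + (if n % 8 = 0 then 0 else if n % 8 ≤ 3 then 1 else 2) ≤ cost f := by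
  classical
  have hpack := hmax.1
  rcases Nat.lt_or_ge (SS n f).card 2 with hlt | hge
  · rcases Nat.lt_or_ge (SS n f).card 1 with h0 | h1
    · -- S empty : contradiction with maximality
      exfalso
      have hempty : SS n f = ∅ := Finset.card_eq_zero.mp (by omega)
      have hf0 : ∀ y, f y = 0 := by
        intro y
        apply notMem_SS
        rw [hempty]
        exact Finset.notMem_empty y
      set v0 : Fin n := ⟨0, by omega⟩ with hv0
      set g : Fin n → ℕ := fun y => if y = v0 then 1 else 0 with hg
      have hgp : IsPacking (SimpleGraph.cycleGraph n) g := by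
        constructor
        · intro y
          by_cases hy : y = v0
          · simp only [hg, if_pos hy]
            exact ecc_pos hn y
          · simp only [hg, if_neg hy]
            omega
        · intro y a ha b hb
          have hav : a = v0 := by
            by_contra hc
            have := ha.1
            rw [hg] at this
            simp only [if_neg hc] at this
            omega
          have hbv : b = v0 := by
            by_contra hc
            have := hb.1
            rw [hg] at this
            simp only [if_neg hc] at this
            omega
          rw [hav, hbv]
      have hge' : ∀ y, f y ≤ g y := fun y => by rw [hf0 y]; omega
      have hgf := hmax.2 g hgp hge'
      have h1 : (1 : ℕ) = f v0 := by simpa [hg] using congrFun hgf v0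
      rw [hf0 v0] at h1
      omega
    · -- S has exactly one element
      obtain ⟨v, hvS⟩ := Finset.card_eq_one.mp (show (SS n f).card = 1 by omega)
      have hmemv : v ∈ SS n f := by rw [hvS]; exact Finset.mem_singleton_self v
      have hcost : cost f = f v := by
        rw [cost_eq_sum_SS, hvS, Finset.sum_singleton]
      have hfv : n / 2 ≤ f v := by
        by_contra hc
        push_neg at hc
        set g : Fin n → ℕ := fun y => if y = v then f v + 1 else f y with hg
        have hgp : IsPacking (SimpleGraph.cycleGraph n) g := by
          constructor
          · intro y
            by_cases hy : y = v
            · simp only [hg, if_pos hy]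
              rw [ecc_eq hn]
              omega
            · simp only [hg, if_neg hy]
              exact hpack.1 y
          · intro y a ha b hb
            have hone : ∀ c : Fin n, 1 ≤ g c → c = v := by
              intro c hcg
              by_contra hcc
              rw [hg] at hcg
              simp only [if_neg hcc] at hcg
              have : c ∈ SS n f := mem_SS.mpr hcg
              rw [hvS] at this
              exact hcc (Finset.mem_singleton.mp this)
            rw [hone a ha.1, hone b hb.1]
        have hge' : ∀ y, f y ≤ g y := by
          intro y
          rw [hg]
          by_cases hy : y = v
          · simp only [if_pos hy]
            rw [hy]
            omega
          · simp only [if_neg hy]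
            exact le_refl _
        have hgf := hmax.2 g hgp hge'
        have h1 : f v + 1 = f v := by simpa [hg] using congrFun hgf v
        omega
      rw [hcost]
      split_ifs <;> omega
  · -- main case
    have h1 := total_bound hn hmax hge
    have h2 := card_le_2T hn hmax hge
    have h3 := card_le_cost (f := f)
    split_ifs <;> omega

end Lower4

end CycleAux
namespace CycleAux

open Broadcast Finset

section Upper

variable {n : ℕ}

lemma cd_le_half (hn : 3 ≤ n) (a b : Fin n) : cd n a b ≤ n / 2 := by
  by_cases h : a = b
  · rw [h, cd_self]; omega
  · have := δ_add_δ h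
    unfold cd
    omega

lemma hear_pair (hn : 3 ≤ n) {g : Fin n → ℕ}
    (hgp : IsPacking (SimpleGraph.cycleGraph n) g) {t a b : Fin n} (hab : a ≠ b)
    (ha : 1 ≤ g a) (hb : 1 ≤ g b) (hda : cd n t a ≤ g a) (hdb : cd n t b ≤ g b) : False := by
  apply hab
  apply hgp.2 t
  · exact ⟨ha, by rw [dist_eq_cd hn]; exact hda⟩
  · exact ⟨hb, by rw [dist_eq_cd hn]; exact hdb⟩

/-- single-vertex maximal packing of cost n/2 -/
lemma exists_single (hn : 3 ≤ n) :
    ∃ f : Fin n → ℕ, IsMaximalPacking (SimpleGraph.cycleGraph n) f ∧ cost f = n / 2 := by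
  have h0 : 0 < n := by omega
  set v0 : Fin n := ⟨0, h0⟩ with hv0
  set f : Fin n → ℕ := fun y => if y = v0 then n / 2 else 0 with hf
  have hone : ∀ c : Fin n, 1 ≤ f c → c = v0 := by
    intro c hc
    by_contra hcc
    rw [hf] at hc
    simp only [if_neg hcc] at hc
    omega
  have hfp : IsPacking (SimpleGraph.cycleGraph n) f := by
    constructor
    · intro y
      rw [ecc_eq hn, hf]
      by_cases hy : y = v0
      · simp only [if_pos hy]
        exact le_refl _
      · simp only [if_neg hy]
        omega
    · intro y a ha b hb
      rw [hone a ha.1, hone b hb.1]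
  refine ⟨f, ⟨hfp, ?_⟩, ?_⟩
  · intro g hgp hge
    funext y
    by_cases hy : y = v0
    · have h1 : g y ≤ n / 2 := by
        have := hgp.1 y
        rw [ecc_eq hn] at this
        exact this
      have h2 : n / 2 ≤ g y := by
        have := hge y
        rw [hf] at this
        simp only [if_pos hy] at this
        omega
      rw [hf]
      simp only [if_pos hy]
      omega
    · rw [hf]
      simp only [if_neg hy]
      by_contra hne
      have hgy : 1 ≤ g y := by omega
      have hgv0 : n / 2 ≤ g v0 := by
        have := hge v0
        rw [hf] at this
        simp only [if_pos rfl] at this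
        exact this
      have h1 : 1 ≤ g v0 := by omega
      exact hear_pair hn hgp hy hgy h1 (by rw [cd_self]; omega)
        (le_trans (cd_le_half hn y v0) hgv0)
  · rw [hf]
    unfold cost
    rw [Finset.sum_ite_eq' Finset.univ v0 (fun _ => n / 2)]
    simp

/-- master construction lemma -/
lemma master (n k : ℕ) (p : ℕ → ℕ) (Hk : 2 ≤ k) (Hp0 : p 0 = 0) (Hp1 : p 1 = 3)
    (Hgap : ∀ i, i + 1 < k → p i + 3 ≤ p (i+1) ∧ p (i+1) ≤ p i + 5)
    (Hlast : p (k-1) + 3 ≤ n ∧ n ≤ p (k-1) + 5)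
    (Htight : ∀ i, 0 < i → i < k →
      ((if i + 1 = k then n else p (i+1)) = p i + 3) ∨ (p i = p (i-1) + 3)) :
    ∃ f : Fin n → ℕ, IsMaximalPacking (SimpleGraph.cycleGraph n) f ∧ cost f = k := by
  classical
  -- monotonicity
  have hmono3 : ∀ i j, i ≤ j → j < k → p i + 3 * (j - i) ≤ p j := by
    intro i j hij hjk
    induction j with
    | zero =>
      have : i = 0 := by omega
      subst this
      simp
    | succ j ih =>
      rcases Nat.eq_or_lt_of_le hij with h | h
      · subst h
        simp
      · have hij' : i ≤ j := by omega
        have hjk' : j < k := by omega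
        have := ih hij' hjk'
        have := (Hgap j (by omega)).1
        omega
  have hplt : ∀ i, i < k → p i + 3 ≤ n := by
    intro i hi
    have := hmono3 i (k-1) (by omega) (by omega)
    have := Hlast.1
    omega
  have hn6 : 6 ≤ n := by
    have h1 := hmono3 1 (k-1) (by omega) (by omega)
    have := Hlast.1
    omega
  have hn : 3 ≤ n := by omega
  have h0n : 0 < n := by omega
  set vt : ℕ → Fin n := fun i => ⟨p i % n, Nat.mod_lt _ h0n⟩ with hvt
  have hvtval : ∀ i, i < k → (vt i).val = p i := by
    intro i hi
    rw [hvt]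
    exact Nat.mod_eq_of_lt (by have := hplt i hi; omega)
  set SC : Finset (Fin n) := (Finset.range k).image vt with hSC
  have hmemSC : ∀ x : Fin n, x ∈ SC ↔ ∃ i, i < k ∧ vt i = x := by
    intro x
    rw [hSC]
    simp only [Finset.mem_image, Finset.mem_range]
  have hsep : ∀ i j, i < j → j < k →
      δ n (vt i) (vt j) = p j - p i ∧ δ n (vt j) (vt i) = p i + n - p j := by
    intro i j hij hjk
    have hlt : p i < p j := by
      have := hmono3 i j (by omega) hjk
      omega
    have hvi := hvtval i (by omega)
    have hvj := hvtval j hjk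
    have hjn : p j < n := by have := hplt j hjk; omega
    constructor
    · unfold δ
      rw [hvi, hvj]
      split <;> omega
    · unfold δ
      rw [hvi, hvj]
      split <;> omega
  have hcd3 : ∀ x y, x ∈ SC → y ∈ SC → x ≠ y → 3 ≤ cd n x y := by
    intro x y hx hy hxy
    obtain ⟨i, hi, rfl⟩ := (hmemSC x).mp hx
    obtain ⟨j, hj, rfl⟩ := (hmemSC y).mp hy
    have hij : i ≠ j := fun h => hxy (by rw [h])
    rcases Nat.lt_or_ge i j with h | h
    · obtain ⟨h1, h2⟩ := hsep i j h hj
      have h3 := hmono3 i j (by omega) hj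
      have h4 := hplt j hj
      unfold cd
      omega
    · have h' : j < i := by omega
      obtain ⟨h1, h2⟩ := hsep j i h' hi
      have h3 := hmono3 j i (by omega) hi
      have h4 := hplt i hi
      unfold cd
      omega
  set f : Fin n → ℕ := fun u => if u ∈ SC then 1 else 0 with hf
  have hfS : ∀ x, x ∈ SC → f x = 1 := by
    intro x hx
    rw [hf]
    simp only [if_pos hx]
  have hfnS : ∀ x, x ∉ SC → f x = 0 := by
    intro x hx
    rw [hf]
    simp only [if_neg hx]
  have hf1 : ∀ x, 1 ≤ f x → x ∈ SC := by
    intro x hx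
    by_contra hc
    rw [hfnS x hc] at hx
    omega
  have hfp : IsPacking (SimpleGraph.cycleGraph n) f := by
    constructor
    · intro y
      rw [ecc_eq hn, hf]
      by_cases hy : y ∈ SC
      · simp only [if_pos hy]
        omega
      · simp only [if_neg hy]
        omega
    · intro y a ha b hb
      have haS := hf1 a ha.1
      have hbS := hf1 b hb.1
      by_contra hab
      have h1 : cd n y a ≤ 1 := by
        have := ha.2
        rw [dist_eq_cd hn] at this
        have := hfS a haS
        omega
      have h2 : cd n y b ≤ 1 := by
        have := hb.2
        rw [dist_eq_cd hn] at this
        have := hfS b hbS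
        omega
      have htri := cd_triangle a y b
      have := cd_comm y a
      have := hcd3 a b haS hbS hab
      omega
  -- find_gap helper
  have hfind : ∀ j, j ≤ k → ∀ m : ℕ, m < (if j = k then n else p j) →
      ∃ i, i < j ∧ p i ≤ m ∧ m < (if i + 1 = k then n else p (i+1)) := by
    intro j
    induction j with
    | zero =>
      intro hj m hm
      rw [if_neg (by omega)] at hm
      rw [Hp0] at hm
      omega
    | succ j ih =>
      intro hj m hm
      by_cases hpj : p j ≤ m
      · refine ⟨j, by omega, hpj, ?_⟩
        exact hm
      · have hjk : j < k := by omega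
        obtain ⟨i, hi, h1, h2⟩ := ih (by omega) m (by rw [if_neg (by omega)]; omega)
        exact ⟨i, by omega, h1, h2⟩
  refine ⟨f, ⟨hfp, ?_⟩, ?_⟩
  · -- maximality
    intro g hgp hge
    funext y
    by_contra hney
    have hgy : f y < g y := by
      have := hge y
      omega
    by_cases hyS : y ∈ SC
    · -- y is a broadcast vertex, g y ≥ 2
      have hgy2 : 2 ≤ g y := by
        have := hfS y hyS
        omega
      obtain ⟨i, hi, rfl⟩ := (hmemSC y).mp hyS
      -- find tight neighbor
      have hnbr : ∃ w, w ∈ SC ∧ (δ n (vt i) w = 3 ∨ δ n w (vt i) = 3) := by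
        rcases Nat.eq_zero_or_pos i with h0 | hpos
        · subst h0
          refine ⟨vt 1, (hmemSC _).mpr ⟨1, by omega, rfl⟩, Or.inl ?_⟩
          rw [(hsep 0 1 (by omega) (by omega)).1, Hp0, Hp1]
        · rcases Htight i hpos hi with hA | hB
          · by_cases hik : i + 1 = k
            · refine ⟨vt 0, (hmemSC _).mpr ⟨0, by omega, rfl⟩, Or.inl ?_⟩
              rw [(hsep 0 i (by omega) hi).2, Hp0]
              rw [if_pos hik] at hA
              omega
            · refine ⟨vt (i+1), (hmemSC _).mpr ⟨i+1, by omega, rfl⟩, Or.inl ?_⟩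
              rw [(hsep i (i+1) (by omega) (by omega)).1]
              rw [if_neg hik] at hA
              omega
          · refine ⟨vt (i-1), (hmemSC _).mpr ⟨i-1, by omega, rfl⟩, Or.inr ?_⟩
            rw [(hsep (i-1) i (by omega) hi).1]
            omega
      obtain ⟨w, hwS, hδ⟩ := hnbr
      have hwy : vt i ≠ w := by
        intro h
        rcases hδ with h3 | h3 <;> rw [h, δ_self] at h3 <;> omega
      have hgw : 1 ≤ g w := by
        have := hge w
        rw [hfS w hwS] at this
        omega
      rcases hδ with h3 | h3
      · -- w = vAdd (vt i) 3
        have hw3 : w = vAdd (vt i) 3 := by rw [← h3, vAdd_δ]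
        set t := vAdd (vt i) 2 with ht
        have hd1 : cd n t (vt i) ≤ 2 := by
          have : δ n (vt i) t = 2 := δ_vAdd _ (by omega)
          have h4 := cd_le_δ' t (vt i)
          omega
        have hd2 : cd n t w ≤ 1 := by
          have hwt : w = vAdd t 1 := by rw [hw3, ht, vAdd_vAdd]
          have : δ n t w = 1 := by rw [hwt]; exact δ_vAdd _ (by omega)
          have h4 := cd_le_δ t w
          omega
        exact hear_pair hn hgp (fun h => hwy h.symm) hgw (by omega) (le_trans hd2 hgw)
          (le_trans hd1 hgy2)
      · -- vt i = vAdd w 3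
        have hw3 : vt i = vAdd w 3 := by rw [← h3, vAdd_δ]
        set t := vAdd w 1 with ht
        have hd1 : cd n t w ≤ 1 := by
          have : δ n w t = 1 := δ_vAdd _ (by omega)
          have h4 := cd_le_δ' t w
          omega
        have hd2 : cd n t (vt i) ≤ 2 := by
          have hwt : vt i = vAdd t 2 := by rw [hw3, ht, vAdd_vAdd]
          have : δ n t (vt i) = 2 := by rw [hwt]; exact δ_vAdd _ (by omega)
          have h4 := cd_le_δ t (vt i)
          omega
        exact hear_pair hn hgp (fun h => hwy h.symm) hgw (by omega) (le_trans hd1 hgw)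
          (le_trans hd2 hgy2)
    · -- y is not a broadcast vertex, g y ≥ 1
      have hgy1 : 1 ≤ g y := by
        have := hfnS y hyS
        omega
      obtain ⟨i, hik, h1, h2⟩ := hfind k (le_refl k) y.val (by rw [if_pos rfl]; exact y.isLt)
      have hvti := hvtval i hik
      have hne1 : vt i ≠ y := by
        intro h
        exact hyS (h ▸ (hmemSC _).mpr ⟨i, hik, rfl⟩)
      have ha1 : p i < y.val := by
        rcases Nat.eq_or_lt_of_le h1 with h | h
        · exfalso
          apply hne1
          apply Fin.ext
          rw [hvti, h]
        · exact h
      -- the two neighbors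
      have hδ1 : δ n (vt i) y = y.val - p i := by
        unfold δ
        rw [hvti]
        split <;> omega
      have hqb : (if i + 1 = k then n else p (i+1)) ≤ p i + 5 := by
        by_cases hik' : i + 1 = k
        · rw [if_pos hik']
          have := Hlast.2
          have : i = k - 1 := by omega
          subst this
          omega
        · rw [if_neg hik']
          exact (Hgap i (by omega)).2
      by_cases hcase : y.val - p i ≤ 2
      · -- close to vt i
        rcases Nat.eq_or_lt_of_le hcase with hc2 | hc1
        · -- distance exactly 2
          set t := vAdd (vt i) 1 with ht
          have hyv : y = vAdd (vt i) 2 := by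
            have : y = vAdd (vt i) (δ n (vt i) y) := (vAdd_δ _ _).symm
            rw [hδ1] at this
            rw [this, hc2.symm]
          have hd1 : cd n t (vt i) ≤ 1 := by
            have : δ n (vt i) t = 1 := δ_vAdd _ (by omega)
            have h4 := cd_le_δ' t (vt i)
            omega
          have hd2 : cd n t y ≤ 1 := by
            have hwt : y = vAdd t 1 := by rw [hyv, ht, vAdd_vAdd]
            have : δ n t y = 1 := by rw [hwt]; exact δ_vAdd _ (by omega)
            have h4 := cd_le_δ t y
            omega
          have hgw : 1 ≤ g (vt i) := by
            have := hge (vt i)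
            rw [hfS (vt i) ((hmemSC _).mpr ⟨i, hik, rfl⟩)] at this
            omega
          exact hear_pair hn hgp hne1 hgw hgy1 (le_trans hd1 hgw) (le_trans hd2 hgy1)
        · -- distance 1
          have hd : cd n y (vt i) ≤ 1 := by
            have h4 := cd_le_δ' y (vt i)
            omega
          have hgw : 1 ≤ g (vt i) := by
            have := hge (vt i)
            rw [hfS (vt i) ((hmemSC _).mpr ⟨i, hik, rfl⟩)] at this
            omega
          exact hear_pair hn hgp (fun h => hne1 h.symm) hgy1 hgw (by rw [cd_self]; omega)
            (le_trans hd hgw)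
      · -- close to the successor
        set w := (if i + 1 = k then vt 0 else vt (i+1)) with hw
        have hwS : w ∈ SC := by
          rw [hw]
          by_cases hik' : i + 1 = k
          · rw [if_pos hik']
            exact (hmemSC _).mpr ⟨0, by omega, rfl⟩
          · rw [if_neg hik']
            exact (hmemSC _).mpr ⟨i+1, by omega, rfl⟩
        have hwval : w.val = (if i + 1 = k then n else p (i+1)) % n := by
          rw [hw]
          by_cases hik' : i + 1 = k
          · rw [if_pos hik', if_pos hik', hvt]
            simp only
            rw [Hp0, Nat.zero_mod, Nat.mod_self]
          · rw [if_neg hik', if_neg hik', hvt]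
        have hδ2 : δ n y w = (if i + 1 = k then n else p (i+1)) - y.val := by
          by_cases hik' : i + 1 = k
          · have : w.val = 0 := by
              rw [hwval, if_pos hik', Nat.mod_self]
            unfold δ
            rw [this, if_pos hik']
            have hy0 : 0 < y.val := by omega
            have := y.isLt
            split <;> omega
          · have hpi1 : p (i+1) < n := by
              have := hplt (i+1) (by omega)
              omega
            have : w.val = p (i+1) := by
              rw [hwval, if_neg hik', Nat.mod_eq_of_lt hpi1]
            unfold δ
            rw [this, if_neg hik']
            rw [if_neg hik'] at h2
            split <;> omega
        have hwy : y ≠ w := by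
          intro h
          exact hyS (h ▸ hwS)
        have hgw : 1 ≤ g w := by
          have := hge w
          rw [hfS w hwS] at this
          omega
        have ha' : 1 ≤ δ n y w ∧ δ n y w ≤ 2 := by
          rw [hδ2]
          omega
        rcases Nat.eq_or_lt_of_le ha'.2 with hc2 | hc1
        · -- distance exactly 2
          set t := vAdd y 1 with ht
          have hwv : w = vAdd y 2 := by
            have : w = vAdd y (δ n y w) := (vAdd_δ _ _).symm
            rw [this, hc2]
          have hd1 : cd n t y ≤ 1 := by
            have : δ n y t = 1 := δ_vAdd _ (by omega)
            have h4 := cd_le_δ' t y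
            omega
          have hd2 : cd n t w ≤ 1 := by
            have hwt : w = vAdd t 1 := by rw [hwv, ht, vAdd_vAdd]
            have : δ n t w = 1 := by rw [hwt]; exact δ_vAdd _ (by omega)
            have h4 := cd_le_δ t w
            omega
          exact hear_pair hn hgp hwy hgy1 hgw (le_trans hd1 hgy1) (le_trans hd2 hgw)
        · -- distance 1
          have hd : cd n y w ≤ 1 := by
            have h4 := cd_le_δ y w
            omega
          exact hear_pair hn hgp hwy hgy1 hgw (by rw [cd_self]; omega) (le_trans hd hgw)
  · -- cost
    rw [hf]
    unfold cost
    rw [Finset.sum_ite_mem, Finset.univ_inter, Finset.sum_const, smul_eq_mul, mul_one, hSC]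
    rw [Finset.card_image_of_injOn, Finset.card_range]
    intro i hi j hj hij
    simp only [Finset.coe_range, Set.mem_Iio] at hi hj
    by_contra hne
    rcases Nat.lt_or_ge i j with h | h
    · have := (hsep i j h hj).1
      have h3 := hmono3 i j (by omega) hj
      rw [hij, δ_self] at this
      omega
    · have h' : j < i := by omega
      have := (hsep j i h' hi).1
      have h3 := hmono3 j i (by omega) hi
      rw [← hij, δ_self] at this
      omega

end Upper

end CycleAux

namespace CycleAux

open Broadcast

def pp (z b c : ℕ) (i : ℕ) : ℕ :=
  if i < z then 3*i
  else if i < z + 2*b then 3*z + 7*((i-z)/2) + 3*((i-z)%2)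
  else 3*z + 7*b + 8*((i-z-2*b)/2) + 3*((i-z-2*b)%2)

lemma exists_pattern (n z b c : ℕ) (hb : b ≤ 1) (hk : 2 ≤ z + 2*b + 2*c)
    (hne : n = 3*z + 7*b + 8*c) :
    ∃ f : Fin n → ℕ, IsMaximalPacking (SimpleGraph.cycleGraph n) f ∧
      cost f = z + 2*b + 2*c := by
  apply master n (z + 2*b + 2*c) (pp z b c) hk
  · unfold pp
    split_ifs <;> omega
  · unfold pp
    split_ifs <;> omega
  · intro i hi
    unfold pp
    split_ifs <;> omega
  · unfold pp
    split_ifs <;> omega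
  · intro i h0 hik
    unfold pp
    split_ifs <;> omega

lemma exists_opt (n : ℕ) (hn : 3 ≤ n) :
    ∃ f : Fin n → ℕ, IsMaximalPacking (SimpleGraph.cycleGraph n) f ∧
      cost f = 2*(n/8) + (if n % 8 = 0 then 0 else if n % 8 ≤ 3 then 1 else 2) := by
  by_cases h5 : n ≤ 5
  · obtain ⟨f, hf, hc⟩ := exists_single hn
    refine ⟨f, hf, ?_⟩
    rw [hc]
    split_ifs <;> omega
  · push_neg at h5
    have hr8 : n % 8 < 8 := Nat.mod_lt _ (by omega)
    have hdm := Nat.div_add_mod n 8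
    rcases (show n%8 = 0 ∨ n%8=1 ∨ n%8=2 ∨ n%8=3 ∨ n%8=4 ∨ n%8=5 ∨ n%8=6 ∨ n%8=7 by omega)
      with h|h|h|h|h|h|h|h
    · obtain ⟨f, hf, hc⟩ := exists_pattern n 0 0 (n/8) (by omega) (by omega) (by omega)
      exact ⟨f, hf, by rw [hc]; split_ifs <;> omega⟩
    · obtain ⟨f, hf, hc⟩ := exists_pattern n 3 0 (n/8 - 1) (by omega) (by omega) (by omega)
      exact ⟨f, hf, by rw [hc]; split_ifs <;> omega⟩
    · obtain ⟨f, hf, hc⟩ := exists_pattern n 1 1 (n/8 - 1) (by omega) (by omega) (by omega)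
      exact ⟨f, hf, by rw [hc]; split_ifs <;> omega⟩
    · obtain ⟨f, hf, hc⟩ := exists_pattern n 1 0 (n/8) (by omega) (by omega) (by omega)
      exact ⟨f, hf, by rw [hc]; split_ifs <;> omega⟩
    · obtain ⟨f, hf, hc⟩ := exists_pattern n 4 0 (n/8 - 1) (by omega) (by omega) (by omega)
      exact ⟨f, hf, by rw [hc]; split_ifs <;> omega⟩
    · obtain ⟨f, hf, hc⟩ := exists_pattern n 2 1 (n/8 - 1) (by omega) (by omega) (by omega)
      exact ⟨f, hf, by rw [hc]; split_ifs <;> omega⟩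
    · obtain ⟨f, hf, hc⟩ := exists_pattern n 2 0 (n/8) (by omega) (by omega) (by omega)
      exact ⟨f, hf, by rw [hc]; split_ifs <;> omega⟩
    · obtain ⟨f, hf, hc⟩ := exists_pattern n 0 1 (n/8) (by omega) (by omega) (by omega)
      exact ⟨f, hf, by rw [hc]; split_ifs <;> omega⟩

lemma lbp_eq (n : ℕ) (hn : 3 ≤ n) :
    lowerBroadcastPacking (SimpleGraph.cycleGraph n)
      = 2*(n/8) + (if n % 8 = 0 then 0 else if n % 8 ≤ 3 then 1 else 2) := by
  obtain ⟨f0, hf0, hc0⟩ := exists_opt n hn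
  have hmem : (2*(n/8) + (if n % 8 = 0 then 0 else if n % 8 ≤ 3 then 1 else 2)) ∈
      {c | ∃ f, IsMaximalPacking (SimpleGraph.cycleGraph n) f ∧ cost f = c} := ⟨f0, hf0, hc0⟩
  unfold lowerBroadcastPacking
  apply le_antisymm
  · exact Nat.sInf_le hmem
  · obtain ⟨f1, hf1, hc1⟩ := Nat.sInf_mem (Set.nonempty_of_mem hmem)
    rw [← hc1]
    exact cost_lower hn hf1

end CycleAux


open Broadcast in
/-- For every integer n ≥ 3: p_b(C_n) = n/4 if n ≡ 0 (mod 8);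
p_b(C_n) = 2⌊n/8⌋ + 1 if n ≡ 1, 2, 3 (mod 8);
p_b(C_n) = 2⌊n/8⌋ + 2 if n ≡ 4, 5, 6, 7 (mod 8). -/
theorem lowerBroadcastPacking_cycleGraph (n : ℕ) (hn : 3 ≤ n) :
    (n % 8 = 0 → lowerBroadcastPacking (SimpleGraph.cycleGraph n) = n / 4) ∧
    (n % 8 = 1 ∨ n % 8 = 2 ∨ n % 8 = 3 →
      lowerBroadcastPacking (SimpleGraph.cycleGraph n) = 2 * (n / 8) + 1) ∧
    (n % 8 = 4 ∨ n % 8 = 5 ∨ n % 8 = 6 ∨ n % 8 = 7 →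
      lowerBroadcastPacking (SimpleGraph.cycleGraph n) = 2 * (n / 8) + 2) := by
  have h := CycleAux.lbp_eq n hn
  refine ⟨fun hr => ?_, fun hr => ?_, fun hr => ?_⟩ <;> rw [h] <;> split_ifs <;> omega
end
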